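/- arXiv:2602.19408 — 6 statements merged into one kernel-verified Lean document; each statement's English description precedes it below -/
import Mathlib

section
/- Let G = (V, E) be a finite directed graph, M' a matching of its split bipartite graph G', and F ⊆ E the set of edges (u, v) of G with (f_L(u), f_R(v)) ∈ M'. Then the number of weakly connected components of G_F = (V, F) that are simple directed paths (counting single vertices as paths, and not counting cycle components) equals |V| − |M'|. -/
open scoped Classical

variable {V : Type*} [DecidableEq V]

/-- In-degree of `v` in the digraph with edge set `E`. -/
def indeg (E : Finset (V × V)) (v : V) : ℕ := (E.filter (fun e => e.2 = v)).card

/-- Out-degree of `v` in the digraph with edge set `E`. -/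
def outdeg (E : Finset (V × V)) (v : V) : ℕ := (E.filter (fun e => e.1 = v)).card

/-- `l` is a simple directed path (possibly a single vertex) in the digraph `E`. -/
def IsDiPath (E : Finset (V × V)) (l : List V) : Prop :=
  l ≠ [] ∧ l.Nodup ∧ l.Chain' (fun u v => (u, v) ∈ E)

/-- `l` is a simple directed cycle in the digraph `E`. -/
def IsDiCycle (E : Finset (V × V)) (l : List V) : Prop :=
  ∃ h : l ≠ [], l.Nodup ∧ l.Chain' (fun u v => (u, v) ∈ E) ∧
    (l.getLast h, l.head h) ∈ E

/-- A path-and-cycle cover (PC cover) of the digraph `E`. -/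
structure PCCover (E : Finset (V × V)) where
  paths : Finset (List V)
  cycles : Finset (List V)
  paths_are : ∀ l ∈ paths, IsDiPath E l
  cycles_are : ∀ l ∈ cycles, IsDiCycle E l
  disj : Disjoint paths cycles
  pairwiseDisj : ∀ l₁ ∈ paths ∪ cycles, ∀ l₂ ∈ paths ∪ cycles, l₁ ≠ l₂ → ∀ v ∈ l₁, v ∉ l₂
  covers : ∀ v : V, ∃ l ∈ paths ∪ cycles, v ∈ l

/-- Edge set of the split bipartite graph of the digraph `E`, on vertex set `V ⊕ V`
(`Sum.inl` is the left copy `f_L`, `Sum.inr` the right copy `f_R`). -/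
def splitEdges (E : Finset (V × V)) : Finset ((V ⊕ V) × (V ⊕ V)) :=
  E.image (fun e => (Sum.inl e.1, Sum.inr e.2))

/-- A set of edges is a matching if no two of its edges share an endpoint. -/
def IsMatching {W : Type*} (M : Finset (W × W)) : Prop :=
  ∀ e₁ ∈ M, ∀ e₂ ∈ M, e₁ ≠ e₂ →
    e₁.1 ≠ e₂.1 ∧ e₁.1 ≠ e₂.2 ∧ e₁.2 ≠ e₂.1 ∧ e₁.2 ≠ e₂.2

/-- The set `F ⊆ E` of edges of `G` pulled back from a matching of the split bipartite graph. -/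
def pullback (E : Finset (V × V)) (M : Finset ((V ⊕ V) × (V ⊕ V))) : Finset (V × V) :=
  E.filter (fun e => (Sum.inl e.1, Sum.inr e.2) ∈ M)

/-- Weak reachability (reachability after forgetting edge directions) in the digraph `F`. -/
def WReach (F : Finset (V × V)) (a b : V) : Prop :=
  Relation.ReflTransGen (fun x y => (x, y) ∈ F ∨ (y, x) ∈ F) a b

/-- The consecutive-pair edges of a list of vertices. -/
def listEdges (l : List V) : List (V × V) := l.zip l.tail

/-- The induced subgraph of `F` on the vertex set `c` is a simple directed path
(possibly a single vertex): there is a path spanning `c` whose edges are exactly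
the edges of `F` incident to `c`. -/
def IsPathComponent (F : Finset (V × V)) (c : Finset V) : Prop :=
  ∃ l : List V, IsDiPath F l ∧ l.toFinset = c ∧
    ∀ e ∈ F, (e.1 ∈ c ∨ e.2 ∈ c) → e ∈ listEdges l

/-- The weakly connected components of the digraph `F`, as a finite set of vertex sets. -/
noncomputable def weakComponents [Fintype V] (F : Finset (V × V)) : Finset (Finset V) :=
  Finset.univ.image (fun v => Finset.univ.filter (fun w => WReach F v w))

set_option linter.unusedSectionVars false

private lemma listEdges_cons' (a b : V) (t : List V) :
    listEdges (a :: b :: t) = (a, b) :: listEdges (b :: t) := rfl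

private lemma listEdges_mem' : ∀ {l : List V} {p : V × V}, p ∈ listEdges l → p.1 ∈ l ∧ p.2 ∈ l
  | [], p, h => by simp [listEdges] at h
  | [a], p, h => by simp [listEdges] at h
  | a :: b :: t, p, h => by
    rw [listEdges_cons'] at h
    rcases List.mem_cons.1 h with h | h
    · subst h; simp
    · have := listEdges_mem' h
      exact ⟨List.mem_cons_of_mem _ this.1, List.mem_cons_of_mem _ this.2⟩

private lemma listEdges_chain'' {R : V → V → Prop} :
    ∀ {l : List V}, l.Chain' R → ∀ p ∈ listEdges l, R p.1 p.2
  | [], _, p, h => by simp [listEdges] at h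
  | [a], _, p, h => by simp [listEdges] at h
  | a :: b :: t, hc, p, h => by
    rw [listEdges_cons'] at h
    unfold List.Chain' at hc; rw [List.isChain_cons_cons] at hc
    rcases List.mem_cons.1 h with h | h
    · subst h; exact hc.1
    · exact listEdges_chain'' hc.2 p h

private lemma exists_next' : ∀ {l : List V} {y : V}, y ∈ l → l.getLast? ≠ some y →
    ∃ z, (y, z) ∈ listEdges l
  | [], y, hy, _ => by simp at hy
  | [a], y, hy, hne => by simp at hy; subst hy; simp at hne
  | a :: b :: t, y, hy, hne => by
    rw [List.getLast?_cons_cons] at hne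
    rcases List.mem_cons.1 hy with rfl | hy
    · exact ⟨b, by rw [listEdges_cons']; exact List.mem_cons_self⟩
    · obtain ⟨z, hz⟩ := exists_next' hy hne
      exact ⟨z, by rw [listEdges_cons']; exact List.mem_cons_of_mem _ hz⟩

private lemma exists_prev' : ∀ {l : List V} {y : V}, y ∈ l → l.head? ≠ some y →
    ∃ x, (x, y) ∈ listEdges l
  | [], y, hy, _ => by simp at hy
  | [a], y, hy, hne => by simp at hy; subst hy; simp at hne
  | a :: b :: t, y, hy, hne => by
    have hya : y ≠ a := fun h => hne (by simp [h])
    by_cases hyb : y = b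
    · subst hyb; exact ⟨a, by rw [listEdges_cons']; exact List.mem_cons_self⟩
    · have hy' : y ∈ b :: t := (List.mem_cons.1 hy).resolve_left hya
      obtain ⟨x, hx⟩ := exists_prev' hy' (by simp; exact fun h => hyb h.symm)
      exact ⟨x, by rw [listEdges_cons']; exact List.mem_cons_of_mem _ hx⟩

private lemma nodup_fst_ne_getLast' : ∀ {l : List V}, l.Nodup → ∀ {p : V × V},
    p ∈ listEdges l → l.getLast? ≠ some p.1
  | [], _, p, h => by simp [listEdges] at h
  | [a], _, p, h => by simp [listEdges] at h
  | a :: b :: t, hnd, p, h => by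
    rw [List.getLast?_cons_cons]
    rw [listEdges_cons'] at h
    rw [List.nodup_cons] at hnd
    rcases List.mem_cons.1 h with rfl | h
    · intro hc
      obtain ⟨hne, heq⟩ := List.mem_getLast?_eq_getLast hc
      have heq' : a = (b :: t).getLast hne := heq
      exact hnd.1 (heq' ▸ List.getLast_mem hne)
    · exact nodup_fst_ne_getLast' hnd.2 h

private lemma nodup_snd_ne_head' : ∀ {l : List V}, l.Nodup → ∀ {p : V × V},
    p ∈ listEdges l → l.head? ≠ some p.2
  | [], _, p, h => by simp [listEdges] at h
  | [a], _, p, h => by simp [listEdges] at h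
  | a :: b :: t, hnd, p, h => by
    rw [listEdges_cons'] at h
    rw [List.nodup_cons] at hnd
    simp only [List.head?_cons, Option.some_inj]
    rcases List.mem_cons.1 h with rfl | h
    · exact fun hc => hnd.1 (by rw [Option.some_inj.mp hc]; exact List.mem_cons_self)
    · exact fun hc => hnd.1 (by rw [Option.some_inj.mp hc]; exact (listEdges_mem' h).2)

private lemma chain_reach_last' {F : Finset (V × V)} :
    ∀ {l : List V}, l.Chain' (fun a b => (a, b) ∈ F) → ∀ {y : V}, y ∈ l → ∀ {g : V},
      l.getLast? = some g → Relation.ReflTransGen (fun a b => (a, b) ∈ F) y g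
  | [], _, y, hy, g, hg => by simp at hy
  | [a], _, y, hy, g, hg => by
    simp at hy hg; subst hy; subst hg; exact Relation.ReflTransGen.refl
  | a :: b :: t, hc, y, hy, g, hg => by
    rw [List.getLast?_cons_cons] at hg
    unfold List.Chain' at hc; rw [List.isChain_cons_cons] at hc
    rcases List.mem_cons.1 hy with rfl | hy
    · exact Relation.ReflTransGen.head hc.1
        (chain_reach_last' hc.2 (List.mem_cons_self) hg)
    · exact chain_reach_last' hc.2 hy hg

private lemma wreach_symm' {F : Finset (V × V)} {a b : V} (h : WReach F a b) :
    WReach F b a := by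
  induction h with
  | refl => exact Relation.ReflTransGen.refl
  | tail _ h2 ih => exact Relation.ReflTransGen.head (Or.symm h2) ih

private lemma cycle_prop' {F : Finset (V × V)}
    (hfun : ∀ {a b c : V}, (a, b) ∈ F → (a, c) ∈ F → b = c)
    {a b : V} (hab : Relation.ReflTransGen (fun x y => (x, y) ∈ F) a b) :
    (∃ p, (p, a) ∈ F ∧ Relation.ReflTransGen (fun x y => (x, y) ∈ F) a p) →
    ∃ q, (q, b) ∈ F ∧ Relation.ReflTransGen (fun x y => (x, y) ∈ F) b q := by
  induction hab using Relation.ReflTransGen.head_induction_on with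
  | refl => exact id
  | @head a w h1 h2 ih =>
    intro ⟨p, hpa, hap⟩
    rcases hap.cases_head with rfl | ⟨c, hac, hcp⟩
    · have hwa : w = a := hfun h1 hpa
      subst hwa
      exact ih ⟨_, hpa, Relation.ReflTransGen.refl⟩
    · have hwc : w = c := hfun h1 hac
      subst hwc
      exact ih ⟨a, h1, hcp.tail hpa⟩

private lemma exists_back_chain' {F : Finset (V × V)} [Fintype V]
    (hfun : ∀ {a b c : V}, (a, b) ∈ F → (a, c) ∈ F → b = c)
    {v₀ : V} (hout : ∀ w, (v₀, w) ∉ F) :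
    ∀ (n : ℕ) (u : V),
      (Finset.univ.filter
        (fun w => Relation.ReflTransGen (fun x y => (x, y) ∈ F) w u)).card ≤ n →
      Relation.ReflTransGen (fun x y => (x, y) ∈ F) u v₀ →
      ∃ l : List V, l ≠ [] ∧ l.Nodup ∧ l.Chain' (fun a b => (a, b) ∈ F) ∧
        l.getLast? = some u ∧ ∀ p x, l.head? = some x → (p, x) ∉ F := by
  intro n
  induction n with
  | zero =>
    intro u hcard _
    exfalso
    have : u ∈ Finset.univ.filter
        (fun w => Relation.ReflTransGen (fun x y => (x, y) ∈ F) w u) :=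
      Finset.mem_filter.2 ⟨Finset.mem_univ _, Relation.ReflTransGen.refl⟩
    have := Finset.card_pos.2 ⟨u, this⟩
    omega
  | succ n ih =>
    intro u hcard hu
    by_cases hp : ∃ p, (p, u) ∈ F
    · obtain ⟨p, hpu⟩ := hp
      have hpv : Relation.ReflTransGen (fun x y => (x, y) ∈ F) p v₀ :=
        Relation.ReflTransGen.head hpu hu
      have hnotcyc : ¬ Relation.ReflTransGen (fun x y => (x, y) ∈ F) u p := by
        intro h
        obtain ⟨q, hq, hvq⟩ := cycle_prop' hfun hu ⟨p, hpu, h⟩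
        rcases hvq.cases_head with rfl | ⟨c, hc, _⟩
        · exact hout _ hq
        · exact hout c hc
      have hsub : Finset.univ.filter
            (fun w => Relation.ReflTransGen (fun x y => (x, y) ∈ F) w p) ⊂
          Finset.univ.filter
            (fun w => Relation.ReflTransGen (fun x y => (x, y) ∈ F) w u) := by
        constructor
        · intro w hw
          rw [Finset.mem_filter] at hw ⊢
          exact ⟨hw.1, hw.2.tail hpu⟩
        · intro hcon
          have : u ∈ Finset.univ.filter
              (fun w => Relation.ReflTransGen (fun x y => (x, y) ∈ F) w p) :=
            hcon (Finset.mem_filter.2 ⟨Finset.mem_univ _, Relation.ReflTransGen.refl⟩)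
          exact hnotcyc (Finset.mem_filter.1 this).2
      have hcard' : (Finset.univ.filter
          (fun w => Relation.ReflTransGen (fun x y => (x, y) ∈ F) w p)).card ≤ n := by
        have := Finset.card_lt_card hsub
        omega
      obtain ⟨l', hne', hnd', hch', hlast', hhead'⟩ := ih p hcard' hpv
      refine ⟨l' ++ [u], by simp, ?_, ?_, ?_, ?_⟩
      · rw [List.nodup_append]
        refine ⟨hnd', List.nodup_singleton _, ?_⟩
        intro x hx y hy hxy
        rw [List.mem_singleton] at hy
        subst hy; subst hxy
        exact hnotcyc (chain_reach_last' hch' hx hlast')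
      · unfold List.Chain'; rw [List.isChain_append]
        refine ⟨hch', List.isChain_singleton _, ?_⟩
        intro x hx y hy
        rw [hlast'] at hx
        simp only [List.head?_cons, Option.mem_some_iff] at hx hy
        subst hx; subst hy
        exact hpu
      · exact List.getLast?_concat
      · intro q x hx
        cases l' with
        | nil => exact absurd rfl hne'
        | cons a t =>
          simp only [List.cons_append, List.head?_cons, Option.some_inj] at hx
          subst hx
          exact hhead' q a rfl
    · push_neg at hp
      exact ⟨[u], by simp, List.nodup_singleton _, List.isChain_singleton _, by simp,
        fun q x hx => by simp at hx; subst hx; exact hp q⟩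

private lemma outdeg_zero_iff' {F : Finset (V × V)} {v : V} :
    outdeg F v = 0 ↔ ∀ w, (v, w) ∉ F := by
  rw [outdeg, Finset.card_eq_zero, Finset.filter_eq_empty_iff]
  constructor
  · intro h w hw; exact h hw rfl
  · intro h e he hev; exact h e.2 (by rwa [← hev, Prod.mk.eta])

private lemma getLast_of_outdeg_zero' {F : Finset (V × V)} {l : List V}
    (hch : l.Chain' (fun a b => (a, b) ∈ F)) {v : V} (hv : v ∈ l)
    (hout : ∀ w, (v, w) ∉ F) : l.getLast? = some v := by
  by_contra h
  obtain ⟨z, hz⟩ := exists_next' hv h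
  exact hout z (listEdges_chain'' hch _ hz)

private lemma comp_isPath' [Fintype V] {F : Finset (V × V)}
    (hfun : ∀ {a b c : V}, (a, b) ∈ F → (a, c) ∈ F → b = c)
    (hinj : ∀ {a b c : V}, (a, c) ∈ F → (b, c) ∈ F → a = b)
    {v₀ : V} (hout : ∀ w, (v₀, w) ∉ F) :
    IsPathComponent F (Finset.univ.filter (fun w => WReach F v₀ w)) := by
  obtain ⟨l, hne, hnd, hch, hlast, hhead⟩ :=
    exists_back_chain' hfun hout (Fintype.card V) v₀
      (le_trans (Finset.card_filter_le _ _) (le_of_eq Finset.card_univ))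
      Relation.ReflTransGen.refl
  have hinc : ∀ e ∈ F, (e.1 ∈ l ∨ e.2 ∈ l) → e ∈ listEdges l := by
    rintro ⟨x, y⟩ he (hx | hy)
    · have hxl : l.getLast? ≠ some x := by
        intro h
        rw [hlast] at h
        exact hout y (by rw [← Option.some_inj.mp h] at he; exact he)
      obtain ⟨z, hz⟩ := exists_next' hx hxl
      have hzF : (x, z) ∈ F := listEdges_chain'' hch _ hz
      have hyz : y = z := hfun he hzF
      rw [hyz]; exact hz
    · have hyl : l.head? ≠ some y := fun h => hhead x y h he
      obtain ⟨w, hw⟩ := exists_prev' hy hyl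
      have hwF : (w, y) ∈ F := listEdges_chain'' hch _ hw
      have hxw : x = w := hinj he hwF
      rw [hxw]; exact hw
  have hv₀ : v₀ ∈ l := by
    obtain ⟨h, heq⟩ := List.mem_getLast?_eq_getLast (Option.mem_def.2 hlast)
    exact heq ▸ List.getLast_mem h
  have hset : l.toFinset = Finset.univ.filter (fun w => WReach F v₀ w) := by
    ext x
    simp only [List.mem_toFinset, Finset.mem_filter, Finset.mem_univ, true_and]
    constructor
    · intro hx
      have hxr : Relation.ReflTransGen (fun a b => (a, b) ∈ F) x v₀ :=
        chain_reach_last' hch hx hlast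
      exact wreach_symm' (Relation.ReflTransGen.mono (p := fun a b => (a, b) ∈ F ∨ (b, a) ∈ F) (fun a b h => Or.inl h) _ _ hxr)
    · intro hx
      induction hx with
      | refl => exact hv₀
      | tail h1 h2 ih =>
        rcases h2 with h2 | h2
        · exact (listEdges_mem' (hinc _ h2 (Or.inl ih))).2
        · exact (listEdges_mem' (hinc _ h2 (Or.inr ih))).1
  refine ⟨l, ⟨hne, hnd, hch⟩, hset, ?_⟩
  intro e he hc
  apply hinc e he
  rcases hc with hc | hc
  · left; rw [← hset] at hc; exact List.mem_toFinset.1 hc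
  · right; rw [← hset] at hc; exact List.mem_toFinset.1 hc

theorem stmt1 [Fintype V] (E : Finset (V × V)) (M : Finset ((V ⊕ V) × (V ⊕ V)))
    (hsub : M ⊆ splitEdges E) (hmatch : IsMatching M) :
    ((weakComponents (pullback E M)).filter (IsPathComponent (pullback E M))).card =
      Fintype.card V - M.card := by
  set F : Finset (V × V) := pullback E M with hF
  have hmemF : ∀ {e : V × V}, e ∈ F → (Sum.inl e.1, Sum.inr e.2) ∈ M :=
    fun he => (Finset.mem_filter.1 he).2
  have hfun : ∀ {a b c : V}, (a, b) ∈ F → (a, c) ∈ F → b = c := by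
    intro a b c hab hac
    by_contra hbc
    have h1 := hmemF hab
    have h2 := hmemF hac
    have hne : ((Sum.inl a : V ⊕ V), (Sum.inr b : V ⊕ V)) ≠ (Sum.inl a, Sum.inr c) := by
      simp [hbc]
    exact (hmatch _ h1 _ h2 hne).1 rfl
  have hinj : ∀ {a b c : V}, (a, c) ∈ F → (b, c) ∈ F → a = b := by
    intro a b c hac hbc
    by_contra hab
    have h1 := hmemF hac
    have h2 := hmemF hbc
    have hne : ((Sum.inl a : V ⊕ V), (Sum.inr c : V ⊕ V)) ≠ (Sum.inl b, Sum.inr c) := by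
      simp [hab]
    exact (hmatch _ h1 _ h2 hne).2.2.2 rfl
  -- |F| = |M|
  have hcardF : F.card = M.card := by
    apply Finset.card_bij (fun e _ => ((Sum.inl e.1 : V ⊕ V), (Sum.inr e.2 : V ⊕ V)))
    · intro e he; exact hmemF he
    · intro e₁ h₁ e₂ h₂ h
      simp only [Prod.mk.injEq, Sum.inl.injEq, Sum.inr.injEq] at h
      exact Prod.ext h.1 h.2
    · intro m hm
      obtain ⟨e, heE, heq⟩ := Finset.mem_image.1 (hsub hm)
      refine ⟨e, Finset.mem_filter.2 ⟨heE, ?_⟩, heq⟩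
      rw [show ((Sum.inl e.1 : V ⊕ V), (Sum.inr e.2 : V ⊕ V)) = m from heq]
      exact hm
  -- degree sum
  have hsum : ∑ v : V, outdeg F v = F.card :=
    (Finset.card_eq_sum_card_fiberwise (fun e _ => Finset.mem_univ e.1)).symm
  have hle1 : ∀ v : V, outdeg F v ≤ 1 := by
    intro v
    apply Finset.card_le_one.2
    intro a ha b hb
    rw [Finset.mem_filter] at ha hb
    have h1 : (v, a.2) ∈ F := by rw [← ha.2, Prod.mk.eta]; exact ha.1
    have h2 : (v, b.2) ∈ F := by rw [← hb.2, Prod.mk.eta]; exact hb.1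
    exact Prod.ext (ha.2.trans hb.2.symm) (hfun h1 h2)
  set T : Finset V := Finset.univ.filter (fun v => outdeg F v = 0) with hT
  have hTcard : T.card = Fintype.card V - F.card := by
    rw [hT]
    have h1 : ∑ v ∈ Finset.univ.filter (fun v => outdeg F v ≠ 0), outdeg F v
        = ∑ v : V, outdeg F v := Finset.sum_filter_ne_zero _
    have h2 : ∑ v ∈ Finset.univ.filter (fun v => outdeg F v ≠ 0), outdeg F v
        = (Finset.univ.filter (fun v => outdeg F v ≠ 0)).card := by
      rw [Finset.card_eq_sum_ones]
      apply Finset.sum_congr rfl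
      intro v hv
      have := (Finset.mem_filter.1 hv).2
      have := hle1 v
      omega
    have h3 := Finset.card_filter_add_card_filter_not
      (s := (Finset.univ : Finset V)) (fun v => outdeg F v = 0)
    have h4 : (Finset.univ.filter (fun v => ¬ outdeg F v = 0)).card = F.card := by
      rw [← h2, h1, hsum]
    rw [Finset.card_univ] at h3
    omega
  -- bijection between T and path components
  have hbij : T.card = ((weakComponents F).filter (IsPathComponent F)).card := by
    apply Finset.card_bij (fun v _ => Finset.univ.filter (fun w => WReach F v w))
    · intro v hv
      have hout : ∀ w, (v, w) ∉ F := outdeg_zero_iff'.1 (Finset.mem_filter.1 hv).2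
      refine Finset.mem_filter.2 ⟨?_, comp_isPath' hfun hinj hout⟩
      exact Finset.mem_image.2 ⟨v, Finset.mem_univ _, rfl⟩
    · intro v hv w hw h
      have houtv : ∀ x, (v, x) ∉ F := outdeg_zero_iff'.1 (Finset.mem_filter.1 hv).2
      have houtw : ∀ x, (w, x) ∉ F := outdeg_zero_iff'.1 (Finset.mem_filter.1 hw).2
      obtain ⟨l, ⟨hne, hnd, hch⟩, hset, _⟩ := comp_isPath' hfun hinj houtw
      have hvl : v ∈ l := by
        rw [← List.mem_toFinset, hset, ← h]
        exact Finset.mem_filter.2 ⟨Finset.mem_univ _, Relation.ReflTransGen.refl⟩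
      have hwl : w ∈ l := by
        rw [← List.mem_toFinset, hset]
        exact Finset.mem_filter.2 ⟨Finset.mem_univ _, Relation.ReflTransGen.refl⟩
      have e1 := getLast_of_outdeg_zero' hch hvl houtv
      have e2 := getLast_of_outdeg_zero' hch hwl houtw
      rw [e1] at e2
      exact Option.some_inj.mp e2
    · intro c hc
      obtain ⟨hc1, hc2⟩ := Finset.mem_filter.1 hc
      obtain ⟨v₀, _, hv₀⟩ := Finset.mem_image.1 hc1
      obtain ⟨l, ⟨hne, hnd, hch⟩, hset, hed⟩ := hc2
      have hgmem : l.getLast hne ∈ l := List.getLast_mem hne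
      have hgc : l.getLast hne ∈ c := by rw [← hset]; exact List.mem_toFinset.2 hgmem
      have hout : ∀ w, (l.getLast hne, w) ∉ F := by
        intro w hw
        have : (l.getLast hne, w) ∈ listEdges l := hed _ hw (Or.inl hgc)
        exact nodup_fst_ne_getLast' hnd this (List.getLast?_eq_getLast hne)
      refine ⟨l.getLast hne, Finset.mem_filter.2 ⟨Finset.mem_univ _, outdeg_zero_iff'.2 hout⟩, ?_⟩
      have hreach : WReach F v₀ (l.getLast hne) := by
        have : l.getLast hne ∈ Finset.univ.filter (fun w => WReach F v₀ w) := by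
          rw [hv₀]; exact hgc
        exact (Finset.mem_filter.1 this).2
      rw [← hv₀]
      ext x
      simp only [Finset.mem_filter, Finset.mem_univ, true_and]
      constructor
      · intro hx; exact Relation.ReflTransGen.trans hreach hx
      · intro hx; exact Relation.ReflTransGen.trans (wreach_symm' hreach) hx
  rw [← hbij, hTcard, hcardF]
end

section
/- Every finite directed graph G admits a necklace cover in which the number of open necklaces equals the number of vertices of G having in-degree zero; consequently, this number is the minimum number of open necklaces over all necklace covers of G. -/
set_option linter.unusedSectionVars false
open scoped Classical

variable {V : Type*} [DecidableEq V]

/-- `H = (verts, edges)` is a necklace of the digraph `E`: a weakly connected subgraph of `E`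
in which every vertex has in-degree at most one. -/
def IsNecklace (E : Finset (V × V)) (H : Finset V × Finset (V × V)) : Prop :=
  H.1.Nonempty ∧ H.2 ⊆ E ∧ (∀ e ∈ H.2, e.1 ∈ H.1 ∧ e.2 ∈ H.1) ∧
  (∀ a ∈ H.1, ∀ b ∈ H.1,
    Relation.ReflTransGen (fun x y => (x, y) ∈ H.2 ∨ (y, x) ∈ H.2) a b) ∧
  (∀ v ∈ H.1, indeg H.2 v ≤ 1)

/-- A necklace is closed if it contains a directed cycle (and open otherwise). -/
def IsClosedNecklace (H : Finset V × Finset (V × V)) : Prop :=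
  ∃ l : List V, IsDiCycle H.2 l

/-- `C` is a necklace cover of the digraph `E`: a collection of necklaces with pairwise
disjoint vertex sets covering every vertex. -/
def IsNecklaceCover (E : Finset (V × V)) (C : Finset (Finset V × Finset (V × V))) : Prop :=
  (∀ H ∈ C, IsNecklace E H) ∧
  (∀ H₁ ∈ C, ∀ H₂ ∈ C, H₁ ≠ H₂ → Disjoint H₁.1 H₂.1) ∧
  (∀ v : V, ∃ H ∈ C, v ∈ H.1)

/-- `N_O`: the number of open necklaces of the cover `C`. -/
noncomputable def numOpen (C : Finset (Finset V × Finset (V × V))) : ℕ :=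
  (C.filter (fun H => ¬ IsClosedNecklace H)).card

/-- Total number of vertices of out-degree zero within their necklace, over the cover `C`. -/
def numSinks (C : Finset (Finset V × Finset (V × V))) : ℕ :=
  ∑ H ∈ C, (H.1.filter (fun v => outdeg H.2 v = 0)).card

/-- `N_L`: the number of pendant leaves of the cover `C` (total number of out-degree-zero
vertices within their necklace, minus the number of open necklaces). -/
noncomputable def numLeaves (C : Finset (Finset V × Finset (V × V))) : ℕ :=
  numSinks C - numOpen C


namespace NeckAux

def UP (F : Finset (V × V)) (a b : V) : Prop :=
  Relation.ReflTransGen (fun x y => (y, x) ∈ F) a b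

lemma indeg_zero_iff {F : Finset (V × V)} {v : V} :
    indeg F v = 0 ↔ ∀ a, (a, v) ∉ F := by
  rw [indeg, Finset.card_eq_zero, Finset.filter_eq_empty_iff]
  constructor
  · intro h a ha
    exact h ha rfl
  · rintro h ⟨a, b⟩ hab hb
    subst hb
    exact h a hab

lemma indeg_mono {F E : Finset (V × V)} (h : F ⊆ E) (v : V) :
    indeg F v ≤ indeg E v :=
  Finset.card_le_card (Finset.filter_subset_filter _ h)

lemma wreach_symm {F : Finset (V × V)} {a b : V} (h : WReach F a b) : WReach F b a :=
  by haveI : Std.Symm (fun x y : V => (x, y) ∈ F ∨ (y, x) ∈ F) := ⟨fun _ _ hxy => hxy.symm⟩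
     exact Relation.ReflTransGen.stdSymm.symm _ _ h

lemma up_total {F : Finset (V × V)}
    (hU : ∀ ⦃a b c : V⦄, (a, c) ∈ F → (b, c) ∈ F → a = b)
    {a b c : V} (h1 : UP F a b) (h2 : UP F a c) : UP F b c ∨ UP F c b :=
  Relation.ReflTransGen.total_of_right_unique (fun _ _ _ hy hz => hU hy hz) h1 h2

lemma wreach_common_anc {F : Finset (V × V)}
    (hU : ∀ ⦃a b c : V⦄, (a, c) ∈ F → (b, c) ∈ F → a = b)
    {a b : V} (h : WReach F a b) : ∃ c, UP F a c ∧ UP F b c := by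
  induction h with
  | refl => exact ⟨a, .refl, .refl⟩
  | @tail m b _ hstep ih =>
    obtain ⟨c, hac, hmc⟩ := ih
    rcases hstep with hmb | hbm
    · exact ⟨c, hac, .head hmb hmc⟩
    · have hmb' : UP F m b := .single hbm
      rcases up_total hU hmb' hmc with h1 | h2
      · exact ⟨c, hac, h1⟩
      · exact ⟨b, hac.trans h2, .refl⟩

lemma up_source {F : Finset (V × V)} {v c : V} (h0 : indeg F v = 0)
    (h : UP F v c) : c = v := by
  rcases Relation.ReflTransGen.cases_head h with h' | ⟨d, hd, _⟩
  · exact h'.symm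
  · exact absurd hd (indeg_zero_iff.mp h0 d)

lemma sources_eq {F : Finset (V × V)}
    (hU : ∀ ⦃a b c : V⦄, (a, c) ∈ F → (b, c) ∈ F → a = b)
    {v w : V} (h : WReach F v w) (h0v : indeg F v = 0) (h0w : indeg F w = 0) :
    v = w := by
  obtain ⟨c, hvc, hwc⟩ := wreach_common_anc hU h
  rw [← up_source h0v hvc, ← up_source h0w hwc]

lemma cyc_parent {F : Finset (V × V)} {l : List V} (hc : IsDiCycle F l) :
    ∀ x ∈ l, ∃ y ∈ l, (y, x) ∈ F := by
  obtain ⟨hne, _, hch, hcl⟩ := hc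
  intro x hx
  obtain ⟨⟨i, hi⟩, rfl⟩ := List.mem_iff_get.mp hx
  cases i with
  | zero =>
    refine ⟨l.getLast hne, List.getLast_mem hne, ?_⟩
    have : l.get ⟨0, hi⟩ = l.head hne := by
      cases l with
      | nil => exact absurd rfl hne
      | cons a t => rfl
    rw [this]
    exact hcl
  | succ j =>
    have hj : j < l.length - 1 := by omega
    refine ⟨l.get ⟨j, by omega⟩, List.get_mem _ _, ?_⟩
    exact List.isChain_iff_getElem.mp hch j (by omega)

lemma anc_in_cycle {F : Finset (V × V)}
    (hU : ∀ ⦃a b c : V⦄, (a, c) ∈ F → (b, c) ∈ F → a = b)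
    {l : List V} (hc : IsDiCycle F l) {t c : V} (ht : t ∈ l) (h : UP F t c) :
    c ∈ l := by
  induction h with
  | refl => exact ht
  | @tail m c _ hstep ih =>
    obtain ⟨y, hy, hym⟩ := cyc_parent hc m ih
    rw [hU hstep hym]
    exact hy

lemma no_source_of_closed {F : Finset (V × V)}
    (hU : ∀ ⦃a b c : V⦄, (a, c) ∈ F → (b, c) ∈ F → a = b)
    {l : List V} (hc : IsDiCycle F l) {v t : V} (ht : t ∈ l)
    (hcon : WReach F v t) (h0 : indeg F v = 0) : False := by
  obtain ⟨c, hvc, htc⟩ := wreach_common_anc hU hcon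
  have hcv : c = v := up_source h0 hvc
  subst hcv
  have hvl : c ∈ l := anc_in_cycle hU hc ht htc
  obtain ⟨y, _, hy⟩ := cyc_parent hc c hvl
  exact indeg_zero_iff.mp h0 y hy

end NeckAux

namespace NeckAux

noncomputable def pf (E : Finset (V × V)) (v : V) : V × V :=
  if h : ∃ e ∈ E, e.2 = v then h.choose else (v, v)

lemma pf_spec {E : Finset (V × V)} {v : V} (h : ∃ e ∈ E, e.2 = v) :
    pf E v ∈ E ∧ (pf E v).2 = v := by
  rw [pf, dif_pos h]
  exact h.choose_spec

noncomputable def FF [Fintype V] (E : Finset (V × V)) : Finset (V × V) :=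
  (Finset.univ.filter (fun v => ∃ e ∈ E, e.2 = v)).image (pf E)

variable [Fintype V]

lemma FF_subset (E : Finset (V × V)) : FF E ⊆ E := by
  intro e he
  obtain ⟨v, hv, rfl⟩ := Finset.mem_image.mp he
  exact (pf_spec (Finset.mem_filter.mp hv).2).1

lemma mem_FF_eq {E : Finset (V × V)} {e : V × V} (he : e ∈ FF E) :
    e = pf E e.2 := by
  obtain ⟨v, hv, rfl⟩ := Finset.mem_image.mp he
  rw [(pf_spec (Finset.mem_filter.mp hv).2).2]

lemma FF_hU {E : Finset (V × V)} :
    ∀ ⦃a b c : V⦄, (a, c) ∈ FF E → (b, c) ∈ FF E → a = b := by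
  intro a b c ha hb
  have h1 := mem_FF_eq ha
  have h2 := mem_FF_eq hb
  have := h1.trans h2.symm
  exact (Prod.mk.injEq _ _ _ _ ▸ this).1

lemma FF_indeg_le (E : Finset (V × V)) (v : V) : indeg (NeckAux.FF E) v ≤ 1 := by
  rw [indeg]
  apply Finset.card_le_one.mpr
  intro a ha b hb
  obtain ⟨ha1, ha2⟩ := Finset.mem_filter.mp ha
  obtain ⟨hb1, hb2⟩ := Finset.mem_filter.mp hb
  rw [mem_FF_eq ha1, mem_FF_eq hb1, ha2, hb2]

lemma mem_FF_of_indeg {E : Finset (V × V)} {v : V} (h : ∃ e ∈ E, e.2 = v) :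
    (pf E v).1 ∈ Finset.univ ∧ ((pf E v).1, v) ∈ FF E := by
  refine ⟨Finset.mem_univ _, ?_⟩
  have : pf E v ∈ FF E :=
    Finset.mem_image.mpr ⟨v, Finset.mem_filter.mpr ⟨Finset.mem_univ _, h⟩, rfl⟩
  have h2 := (pf_spec h).2
  have h4 : pf E v = ((pf E v).1, (pf E v).2) := rfl
  rw [h4, h2] at this
  exact this

lemma FF_indeg_zero_iff {E : Finset (V × V)} {v : V} :
    indeg (NeckAux.FF E) v = 0 ↔ indeg E v = 0 := by
  constructor
  · intro h
    rw [indeg_zero_iff] at h ⊢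
    intro a ha
    by_cases h' : ∃ e ∈ E, e.2 = v
    · exact h _ (mem_FF_of_indeg h').2
    · exact h' ⟨(a, v), ha, rfl⟩
  · intro h
    exact Nat.le_zero.mp (h ▸ indeg_mono (FF_subset E) v)

noncomputable def comp (E : Finset (V × V)) (u : V) : Finset V :=
  Finset.univ.filter (fun w => WReach (FF E) u w)

noncomputable def cedges (E : Finset (V × V)) (u : V) : Finset (V × V) :=
  (FF E).filter (fun e => WReach (FF E) u e.1)

lemma mem_comp {E : Finset (V × V)} {u w : V} :
    w ∈ comp E u ↔ WReach (FF E) u w := by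
  simp [comp]

lemma wreach_restrict {E : Finset (V × V)} {u a b : V}
    (hua : WReach (FF E) u a) (h : WReach (FF E) a b) :
    Relation.ReflTransGen (fun x y => (x, y) ∈ cedges E u ∨ (y, x) ∈ cedges E u) a b := by
  induction h with
  | refl => exact .refl
  | @tail m b hm hstep ih =>
    have hum : WReach (FF E) u m := hua.trans hm
    rcases hstep with h1 | h2
    · exact ih.tail (Or.inl (Finset.mem_filter.mpr ⟨h1, hum⟩))
    · have hub : WReach (FF E) u b := hum.tail (Or.inr h2)
      exact ih.tail (Or.inr (Finset.mem_filter.mpr ⟨h2, hub⟩))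

lemma comp_necklace (E : Finset (V × V)) (u : V) :
    IsNecklace E (comp E u, cedges E u) := by
  refine ⟨⟨u, mem_comp.mpr .refl⟩,
    (Finset.filter_subset _ _).trans (FF_subset E), ?_, ?_, ?_⟩
  · rintro ⟨a, b⟩ he
    obtain ⟨h1, h2⟩ := Finset.mem_filter.mp he
    exact ⟨mem_comp.mpr h2, mem_comp.mpr (h2.tail (Or.inl h1))⟩
  · intro a ha b hb
    exact wreach_restrict (mem_comp.mp ha)
      ((wreach_symm (mem_comp.mp ha)).trans (mem_comp.mp hb))
  · intro v _
    exact (indeg_mono (Finset.filter_subset _ _) v).trans (FF_indeg_le E v)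

lemma comp_congr {E : Finset (V × V)} {u v : V} (h : WReach (FF E) u v) :
    comp E u = comp E v ∧ cedges E u = cedges E v := by
  have key : ∀ w, WReach (FF E) u w ↔ WReach (NeckAux.FF E) v w :=
    fun w => ⟨fun hw => (wreach_symm h).trans hw, fun hw => h.trans hw⟩
  constructor
  · ext w; simp [comp, key w]
  · ext e; simp [cedges, key e.1]

lemma indeg_cedges {E : Finset (V × V)} {u v : V} (hv : v ∈ comp E u) :
    indeg (cedges E u) v = indeg (NeckAux.FF E) v := by
  apply le_antisymm (indeg_mono (Finset.filter_subset _ _) v)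
  apply Finset.card_le_card
  intro e he
  obtain ⟨he1, he2⟩ := Finset.mem_filter.mp he
  refine Finset.mem_filter.mpr ⟨Finset.mem_filter.mpr ⟨he1, ?_⟩, he2⟩
  have : WReach (FF E) u e.2 := by rw [← he2] at hv; exact mem_comp.mp hv
  exact this.tail (Or.inr (by rwa [show (e.1, e.2) = e from rfl]))

end NeckAux

namespace NeckAux

variable [Fintype V]

def descList (p : V → V) (x : V) : ℕ → List V
  | 0 => []
  | k + 1 => p^[k] x :: descList p x k

lemma descList_ne_nil (p : V → V) (x : V) (k : ℕ) : descList p x (k + 1) ≠ [] := by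
  simp [descList]

lemma mem_descList {p : V → V} {x y : V} {k : ℕ} :
    y ∈ descList p x k ↔ ∃ i < k, p^[i] x = y := by
  induction k with
  | zero => simp [descList]
  | succ k ih =>
    simp only [descList, List.mem_cons, ih]
    constructor
    · rintro (rfl | ⟨i, hi, rfl⟩)
      · exact ⟨k, by omega, rfl⟩
      · exact ⟨i, by omega, rfl⟩
    · rintro ⟨i, hi, rfl⟩
      rcases Nat.lt_succ_iff_lt_or_eq.mp hi with h | rfl
      · exact Or.inr ⟨i, h, rfl⟩
      · exact Or.inl rfl

lemma descList_nodup {p : V → V} {x : V} {d : ℕ}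
    (hinj : ∀ i < d, ∀ j < d, p^[i] x = p^[j] x → i = j) :
    ∀ k ≤ d, (descList p x k).Nodup := by
  intro k hk
  induction k with
  | zero => simp [descList]
  | succ k ih =>
    rw [descList, List.nodup_cons]
    refine ⟨?_, ih (by omega)⟩
    intro hmem
    obtain ⟨i, hi, hie⟩ := mem_descList.mp hmem
    have := hinj i (by omega) k (by omega) hie
    omega

lemma descList_head (p : V → V) (x : V) (k : ℕ) :
    (descList p x (k + 1)).head (descList_ne_nil p x k) = p^[k] x := rfl

lemma descList_getLast (p : V → V) (x : V) :
    ∀ k, (descList p x (k + 1)).getLast (descList_ne_nil p x k) = x := by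
  intro k
  induction k with
  | zero => simp [descList]
  | succ k ih =>
    show (p^[k+1] x :: descList p x (k+1)).getLast (by simp) = x
    rw [List.getLast_cons (descList_ne_nil p x k)]
    exact ih

lemma descList_chain' {p : V → V} {x : V} {R : V → V → Prop}
    (hR : ∀ i, R (p^[i + 1] x) (p^[i] x)) :
    ∀ k, (descList p x k).Chain' R := by
  intro k
  induction k with
  | zero => exact List.isChain_nil
  | succ k ih =>
    cases k with
    | zero => exact List.isChain_singleton _
    | succ m =>
      show ((p^[m+1] x) :: descList p x (m+1)).Chain' R
      rw [show List.Chain' R _ = List.IsChain R _ from rfl, List.isChain_cons]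
      refine ⟨?_, ih⟩
      intro h hh
      rw [show (descList p x (m + 1)).head? = some (p^[m] x) from rfl] at hh
      cases hh
      exact hR m

/-- If every vertex weakly reachable from `u` has positive in-degree in `E`,
then the component of `u` contains a directed cycle (within `cedges E u`). -/
lemma exists_cycle {E : Finset (V × V)} {u : V}
    (hall : ∀ w, WReach (FF E) u w → ∃ e ∈ E, e.2 = w) :
    ∃ l, IsDiCycle (cedges E u) l := by
  classical
  set p : V → V := fun w => (pf E w).1 with hp
  -- parent edge in cedges for reachable vertices
  have hedge : ∀ w, WReach (FF E) u w → (p w, w) ∈ cedges E u := by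
    intro w hw
    have h1 := (mem_FF_of_indeg (hall w hw)).2
    exact Finset.mem_filter.mpr ⟨h1, hw.tail (Or.inr h1)⟩
  have hstep : ∀ w, WReach (FF E) u w → WReach (FF E) u (p w) := by
    intro w hw
    exact hw.tail (Or.inr (Finset.mem_filter.mp (hedge w hw)).1)
  have hreach : ∀ k, WReach (FF E) u (p^[k] u) := by
    intro k
    induction k with
    | zero => exact .refl
    | succ k ih => rw [Function.iterate_succ_apply']; exact hstep _ ih
  -- pigeonhole: find a periodic point
  obtain ⟨i, _, j, _, hij, hije⟩ :=
    Finset.exists_ne_map_eq_of_card_lt_of_maps_to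
      (s := Finset.range (Fintype.card V + 1)) (t := Finset.univ)
      (by simp) (fun i _ => Finset.mem_univ (p^[i] u))
  wlog hlt : i < j generalizing i j
  · exact this j ‹_› i ‹_› hij.symm hije.symm (by omega)
  set x := p^[i] u with hx
  have hper : Function.IsPeriodicPt p (j - i) x := by
    show p^[j - i] x = x
    rw [hx, ← Function.iterate_add_apply]
    rw [show j - i + i = j by omega]
    exact hije.symm
  have hpos : 0 < Function.minimalPeriod p x :=
    hper.minimalPeriod_pos (by omega)
  set d := Function.minimalPeriod p x with hd
  have hxr : ∀ k, WReach (FF E) u (p^[k] x) := by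
    intro k
    rw [hx, ← Function.iterate_add_apply]
    exact hreach _
  obtain ⟨m, hm⟩ : ∃ m, Function.minimalPeriod p x = m + 1 :=
    ⟨_, (Nat.succ_pred_eq_of_pos hpos).symm⟩
  refine ⟨descList p x (m + 1), descList_ne_nil p x m, ?_, ?_, ?_⟩
  · refine descList_nodup (d := m + 1) ?_ _ le_rfl
    intro a ha b hb hab
    exact Function.iterate_injOn_Iio_minimalPeriod
      (by rw [hm]; exact Set.mem_Iio.mpr ha)
      (by rw [hm]; exact Set.mem_Iio.mpr hb) hab
  · refine descList_chain' ?_ _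
    intro i
    rw [Function.iterate_succ_apply']
    exact hedge _ (hxr i)
  · rw [descList_getLast, descList_head]
    have hpx : p (p^[m] x) = x := by
      have h3 := Function.iterate_minimalPeriod (f := p) (x := x)
      rwa [hm, Function.iterate_succ_apply'] at h3
    have h2 := hedge (p^[m] x) (hxr m)
    rwa [hpx] at h2

end NeckAux


namespace NeckAux

variable [Fintype V]

lemma necklace_hU {E : Finset (V × V)} {H : Finset V × Finset (V × V)}
    (hn : IsNecklace E H) :
    ∀ ⦃a b c : V⦄, (a, c) ∈ H.2 → (b, c) ∈ H.2 → a = b := by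
  intro a b c h1 h2
  have hc1 : c ∈ H.1 := (hn.2.2.1 _ h1).2
  have hle := hn.2.2.2.2 c hc1
  have heq := Finset.card_le_one.mp hle (a, c)
    (Finset.mem_filter.mpr ⟨h1, rfl⟩) (b, c) (Finset.mem_filter.mpr ⟨h2, rfl⟩)
  exact congrArg Prod.fst heq

lemma necklace_open_of_source {E : Finset (V × V)} {H : Finset V × Finset (V × V)} {v : V}
    (hn : IsNecklace E H) (hv : v ∈ H.1) (h0 : indeg H.2 v = 0) :
    ¬ IsClosedNecklace H := by
  rintro ⟨l, hcyc⟩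
  obtain ⟨hne, hrest⟩ := hcyc
  have hcyc : IsDiCycle H.2 l := ⟨hne, hrest⟩
  have ht : l.head hne ∈ l := List.head_mem hne
  obtain ⟨y, _, hyt⟩ := cyc_parent hcyc _ ht
  have htH : l.head hne ∈ H.1 := (hn.2.2.1 _ hyt).2
  exact no_source_of_closed (necklace_hU hn) hcyc ht (hn.2.2.2.1 v hv _ htH) h0

lemma necklace_source_unique {E : Finset (V × V)} {H : Finset V × Finset (V × V)} {v w : V}
    (hn : IsNecklace E H) (hv : v ∈ H.1) (hw : w ∈ H.1)
    (h0v : indeg H.2 v = 0) (h0w : indeg H.2 w = 0) : v = w :=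
  sources_eq (necklace_hU hn) (hn.2.2.2.1 v hv w hw) h0v h0w

lemma indeg_cedges_zero {E : Finset (V × V)} {v : V} (h0 : indeg E v = 0) (u : V) :
    indeg (cedges E u) v = 0 :=
  Nat.le_zero.mp ((indeg_mono (Finset.filter_subset _ _) v).trans
    (le_of_eq (FF_indeg_zero_iff.mpr h0)))

end NeckAux

theorem stmt7 [Fintype V] (E : Finset (V × V)) :
    (∃ C : Finset (Finset V × Finset (V × V)), IsNecklaceCover E C ∧
        numOpen C = (Finset.univ.filter (fun v : V => indeg E v = 0)).card) ∧
    (∀ C : Finset (Finset V × Finset (V × V)), IsNecklaceCover E C →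
        (Finset.univ.filter (fun v : V => indeg E v = 0)).card ≤ numOpen C) := by
  constructor
  · -- existence of a good cover
    refine ⟨Finset.univ.image (fun u => (NeckAux.comp E u, NeckAux.cedges E u)),
      ⟨?_, ?_, ?_⟩, ?_⟩
    · intro H hH
      obtain ⟨u, _, rfl⟩ := Finset.mem_image.mp hH
      exact NeckAux.comp_necklace E u
    · intro H₁ h₁ H₂ h₂ hne12
      obtain ⟨u, _, rfl⟩ := Finset.mem_image.mp h₁
      obtain ⟨v, _, rfl⟩ := Finset.mem_image.mp h₂
      rw [Finset.disjoint_left]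
      intro w hw hw'
      have h1 := NeckAux.mem_comp.mp hw
      have h2 := NeckAux.mem_comp.mp hw'
      have hcc := NeckAux.comp_congr (h1.trans (NeckAux.wreach_symm h2))
      exact hne12 (by rw [hcc.1, hcc.2])
    · intro v
      exact ⟨_, Finset.mem_image_of_mem _ (Finset.mem_univ v),
        NeckAux.mem_comp.mpr Relation.ReflTransGen.refl⟩
    · rw [numOpen]
      symm
      apply Finset.card_bij (fun v _ => (NeckAux.comp E v, NeckAux.cedges E v))
      · intro v hv
        have h0 : indeg E v = 0 := (Finset.mem_filter.mp hv).2
        refine Finset.mem_filter.mpr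
          ⟨Finset.mem_image_of_mem _ (Finset.mem_univ v), ?_⟩
        exact NeckAux.necklace_open_of_source (NeckAux.comp_necklace E v)
          (NeckAux.mem_comp.mpr Relation.ReflTransGen.refl)
          (NeckAux.indeg_cedges_zero h0 v)
      · intro v hv w hw heq
        have h0v : indeg (NeckAux.FF E) v = 0 :=
          NeckAux.FF_indeg_zero_iff.mpr (Finset.mem_filter.mp hv).2
        have h0w : indeg (NeckAux.FF E) w = 0 :=
          NeckAux.FF_indeg_zero_iff.mpr (Finset.mem_filter.mp hw).2
        have hcomp : NeckAux.comp E v = NeckAux.comp E w := congrArg Prod.fst heq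
        have hwv : WReach (NeckAux.FF E) v w := by
          have : w ∈ NeckAux.comp E v := by
            rw [hcomp]; exact NeckAux.mem_comp.mpr Relation.ReflTransGen.refl
          exact NeckAux.mem_comp.mp this
        exact NeckAux.sources_eq NeckAux.FF_hU hwv h0v h0w
      · intro H hH
        obtain ⟨hHC, hHopen⟩ := Finset.mem_filter.mp hH
        obtain ⟨u, _, rfl⟩ := Finset.mem_image.mp hHC
        by_cases hex : ∃ w, WReach (NeckAux.FF E) u w ∧ indeg E w = 0
        · obtain ⟨w, hw, h0⟩ := hex
          refine ⟨w, Finset.mem_filter.mpr ⟨Finset.mem_univ w, h0⟩, ?_⟩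
          have hcc := NeckAux.comp_congr hw
          rw [hcc.1, hcc.2]
          
        · exfalso
          apply hHopen
          push_neg at hex
          have hcycle : ∀ w, WReach (NeckAux.FF E) u w → ∃ e ∈ E, e.2 = w := by
            intro w hw
            by_contra h'
            exact hex w hw (NeckAux.indeg_zero_iff.mpr
              (fun a ha => h' ⟨(a, w), ha, rfl⟩))
          obtain ⟨l, hl⟩ := NeckAux.exists_cycle hcycle
          exact ⟨l, hl⟩
  · -- lower bound
    intro C hC
    obtain ⟨hneck, _, hcov⟩ := hC
    apply Finset.card_le_card_of_injOn (fun v => (hcov v).choose)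
    · intro v hv
      obtain ⟨hHC, hvH⟩ := (hcov v).choose_spec
      refine Finset.mem_filter.mpr ⟨hHC, ?_⟩
      have hn := hneck _ hHC
      have h0 : indeg (hcov v).choose.2 v = 0 :=
        Nat.le_zero.mp (le_trans (NeckAux.indeg_mono hn.2.1 v)
          (le_of_eq (Finset.mem_filter.mp hv).2))
      exact NeckAux.necklace_open_of_source hn hvH h0
    · intro v hv w hw heq
      simp only [Finset.coe_filter, Set.mem_setOf_eq] at hv hw
      obtain ⟨hHCv, hvH⟩ := (hcov v).choose_spec
      obtain ⟨hHCw, hwH⟩ := (hcov w).choose_spec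
      have heq' : (hcov v).choose = (hcov w).choose := heq
      rw [heq'] at hvH
      have h0v : indeg (hcov w).choose.2 v = 0 :=
        Nat.le_zero.mp (le_trans (NeckAux.indeg_mono (hneck _ hHCw).2.1 v)
          (le_of_eq hv.2))
      have h0w : indeg (hcov w).choose.2 w = 0 :=
        Nat.le_zero.mp (le_trans (NeckAux.indeg_mono (hneck _ hHCw).2.1 w)
          (le_of_eq hw.2))
      exact NeckAux.necklace_source_unique (hneck _ hHCw) hvH hwH h0v h0w
end

section
/- For n ≥ 1, let G_n be the directed graph with 2n vertices v_1, …, v_n, u_1, …, u_n and edges v_i → v_{(i mod n)+1} for 1 ≤ i ≤ n and v_i → u_i for 1 ≤ i ≤ n (a directed n-cycle with one pendant out-neighbor attached to each cycle vertex). Then every path node cover of G_n contains at least n paths, and more generally every path-and-cycle cover of G_n contains at least n paths. -/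
open scoped Classical

variable {V : Type*} [DecidableEq V]

/-- The graph `G_n`: a directed `n`-cycle (on the left copy of `ZMod n`) with one pendant
out-neighbor (in the right copy) attached to each cycle vertex. -/
def gnEdges (n : ℕ) [NeZero n] : Finset ((ZMod n ⊕ ZMod n) × (ZMod n ⊕ ZMod n)) :=
  (Finset.univ.image fun i : ZMod n => (Sum.inl i, Sum.inl (i + 1))) ∪
  (Finset.univ.image fun i : ZMod n => (Sum.inl i, Sum.inr i))


lemma gn_src {n : ℕ} [NeZero n] {a b : ZMod n ⊕ ZMod n}
    (h : (a, b) ∈ gnEdges n) : ∃ i, a = Sum.inl i := by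
  simp only [gnEdges, Finset.mem_union, Finset.mem_image, Finset.mem_univ, true_and] at h
  rcases h with ⟨i, hi⟩ | ⟨i, hi⟩ <;>
    exact ⟨i, (Prod.ext_iff.mp hi).1.symm⟩

lemma chain'_last_or_next {W : Type*} {R : W → W → Prop} :
    ∀ (l : List W), l.Chain' R → ∀ a ∈ l,
      (∃ h : l ≠ [], a = l.getLast h) ∨ ∃ b, R a b
  | [], _, a, ha => absurd ha (List.not_mem_nil (a := a))
  | [x], _, a, ha => by
      simp only [List.mem_singleton] at ha
      exact Or.inl ⟨by simp, by simp [ha]⟩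
  | x :: y :: t, hc, a, ha => by
      rcases List.mem_cons.mp ha with rfl | ha'
      · exact Or.inr ⟨y, (List.isChain_cons_cons.mp hc).1⟩
      · rcases chain'_last_or_next (y :: t) (List.isChain_cons_cons.mp hc).2 a ha' with ⟨h, he⟩ | h
        · refine Or.inl ⟨by simp, ?_⟩
          rw [List.getLast_cons (by simp : (y :: t) ≠ [])]
          exact he
        · exact Or.inr h

theorem stmt11 (n : ℕ) [NeZero n] :
    (∀ C : PCCover (gnEdges n), C.cycles = ∅ → n ≤ C.paths.card) ∧
    (∀ C : PCCover (gnEdges n), n ≤ C.paths.card) := by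
  have main : ∀ C : PCCover (gnEdges n), n ≤ C.paths.card := by
    intro C
    choose f hf1 hf2 using fun i : ZMod n => C.covers (Sum.inr i)
    have hpath : ∀ i : ZMod n, f i ∈ C.paths ∧ ∃ h : f i ≠ [], Sum.inr i = (f i).getLast h := by
      intro i
      rcases Finset.mem_union.mp (hf1 i) with hp | hc
      · obtain ⟨hne, hnd, hch⟩ := C.paths_are _ hp
        rcases chain'_last_or_next _ hch _ (hf2 i) with h | ⟨b, hb⟩
        · exact ⟨hp, h⟩
        · obtain ⟨j, hj⟩ := gn_src hb
          exact absurd hj (by simp)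
      · obtain ⟨hne, hnd, hch, hlast⟩ := C.cycles_are _ hc
        rcases chain'_last_or_next _ hch _ (hf2 i) with ⟨h, he⟩ | ⟨b, hb⟩
        · have : (Sum.inr i, (f i).head hne) ∈ gnEdges n := by rw [he]; exact hlast
          obtain ⟨j, hj⟩ := gn_src this
          exact absurd hj (by simp)
        · obtain ⟨j, hj⟩ := gn_src hb
          exact absurd hj (by simp)
    have key : (Finset.univ : Finset (ZMod n)).card ≤ C.paths.card := by
      apply Finset.card_le_card_of_injOn f (fun i _ => (hpath i).1)
      intro i _ j _ hij
      obtain ⟨h1, e1⟩ := (hpath i).2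
      obtain ⟨h2, e2⟩ := (hpath j).2
      have e1' : (f i).getLast? = some (Sum.inr i) := by
        rw [List.getLast?_eq_getLast h1, ← e1]
      have e2' : (f j).getLast? = some (Sum.inr j) := by
        rw [List.getLast?_eq_getLast h2, ← e2]
      rw [hij, e2'] at e1'
      exact Sum.inr.inj (Option.some.inj e1').symm
    rwa [Finset.card_univ, ZMod.card] at key
  exact ⟨fun C _ => main C, main⟩
end

section
/- Let Σ be a finite alphabet with |Σ| ≥ 2, let k ≥ 4, let n = |Σ|^{k−2}, and let S be a circular string of length n over Σ in which every string of length k−2 over Σ occurs exactly once as a circular substring (a de Bruijn sequence of order k−2). Let α be the string formed by the first k characters of S read circularly, and let X be the linear string S·α of length n + k. Then the k-mers of X are pairwise distinct except that the first and last k-mer coincide, X has exactly n distinct k-mers, and the order-k node-centric de Bruijn graph of {X} is a simple directed cycle of length n. -/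
/-- The list of all k-mer occurrences of `s` (the length-`k` substring at each
valid starting position). -/
def kmerList {α : Type*} (k : ℕ) (s : List α) : List (List α) :=
  (List.range (s.length + 1 - k)).map (fun i => (s.drop i).take k)

/-- `spec_k(I)`: the set of all k-mers of the strings of `I`. -/
def specK {α : Type*} [DecidableEq α] (k : ℕ) (I : Finset (List α)) : Finset (List α) :=
  I.biUnion (fun s => (kmerList k s).toFinset)

/-- `S` is a no-repetition SPSS of `I`: every string of `S` has length at least `k`,
every k-mer of `spec_k(I)` occurs at exactly one position in exactly one string of `S`,
and no other k-mer occurs in any string of `S`. -/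
def IsNoRepSPSS {α : Type*} [DecidableEq α] (k : ℕ) (I S : Finset (List α)) : Prop :=
  (∀ s ∈ S, k ≤ s.length) ∧
  (∀ w ∈ specK k I, ∃ s ∈ S, ∃ i : ℕ, i + k ≤ s.length ∧ (s.drop i).take k = w) ∧
  (∀ s ∈ S, ∀ t ∈ S, ∀ i j : ℕ, i + k ≤ s.length → j + k ≤ t.length →
    (s.drop i).take k = (t.drop j).take k → s = t ∧ i = j) ∧
  (∀ s ∈ S, ∀ i : ℕ, i + k ≤ s.length → (s.drop i).take k ∈ specK k I)

/-- `L` is a simple directed path (possibly a single vertex) in the order-`k` node-centric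
de Bruijn graph of `I`: a nonempty duplicate-free list of vertices (k-mers of `I`) in which the
length-`(k-1)` suffix of each member equals the length-`(k-1)` prefix of the next. -/
def IsDBGPath {α : Type*} [DecidableEq α] (k : ℕ) (I : Finset (List α))
    (L : List (List α)) : Prop :=
  L ≠ [] ∧ L.Nodup ∧ (∀ w ∈ L, w ∈ specK k I) ∧
  L.Chain' (fun u v => u.drop (u.length - (k - 1)) = v.take (k - 1))

/-- A path node cover of the order-`k` node-centric de Bruijn graph of `I`: a collection of
vertex-disjoint simple directed paths whose vertex sets partition `spec_k(I)`. -/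
def IsPathNodeCover {α : Type*} [DecidableEq α] (k : ℕ) (I : Finset (List α))
    (P : Finset (List (List α))) : Prop :=
  (∀ L ∈ P, IsDBGPath k I L) ∧
  (∀ L₁ ∈ P, ∀ L₂ ∈ P, L₁ ≠ L₂ → ∀ w ∈ L₁, w ∉ L₂) ∧
  (∀ w ∈ specK k I, ∃ L ∈ P, w ∈ L)

/-- The circular substring of length `m` of the circular string `s` (of length `n`)
starting at position `i`. -/
def circSub {α : Type*} {n : ℕ} (s : ZMod n → α) (i : ZMod n) (m : ℕ) : List α :=
  (List.range m).map (fun j => s (i + (j : ZMod n)))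

lemma flatMap_cast {n : ℕ} (l : List ℕ) :
    (l.flatMap fun a => [(Nat.cast a : ZMod n)]) = l.map (fun a : ℕ => (Nat.cast a : ZMod n)) := by
  induction l with
  | nil => rfl
  | cons a l ih => rw [List.flatMap_cons, List.map_cons, ih, List.singleton_append]

lemma circSub_eq {α : Type*} {n : ℕ} (s : ZMod n → α) (i : ZMod n) (m : ℕ) :
    circSub s i m = (List.range m).map (fun j : ℕ => s (i + (Nat.cast j : ZMod n))) := by
  show List.map _ (List.flatMap _ _) = _
  simp only [List.pure_def]
  rw [flatMap_cast, List.map_map]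
  rfl

lemma circSub_length {α : Type*} {n : ℕ} (s : ZMod n → α) (i : ZMod n) (m : ℕ) :
    (circSub s i m).length = m := by
  rw [circSub_eq]; simp

lemma circSub_getElem {α : Type*} {n : ℕ} (s : ZMod n → α) (i : ZMod n) (m : ℕ) (j : ℕ)
    (h : j < (circSub s i m).length) : (circSub s i m)[j] = s (i + (j : ZMod n)) := by
  simp only [circSub_eq, List.getElem_map, List.getElem_range]

lemma circSub_take {α : Type*} {n : ℕ} (s : ZMod n → α) (i : ZMod n) {t m : ℕ} (h : t ≤ m) :
    (circSub s i m).take t = circSub s i t := by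
  apply List.ext_getElem
  · simp only [List.length_take, circSub_length]; omega
  · intro j h1 h2
    rw [List.getElem_take, circSub_getElem, circSub_getElem]

lemma circSub_drop_one {α : Type*} {n : ℕ} (s : ZMod n → α) (i : ZMod n) (m : ℕ) :
    (circSub s i m).drop 1 = circSub s (i+1) (m-1) := by
  apply List.ext_getElem
  · simp only [List.length_drop, circSub_length]
  · intro j h1 h2
    rw [List.getElem_drop, circSub_getElem, circSub_getElem]
    congr 1
    push_cast
    ring

theorem stmt12 {α : Type*} [Fintype α] [DecidableEq α] (hcard : 2 ≤ Fintype.card α)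
    (k n : ℕ) (hk : 4 ≤ k) (hn : n = Fintype.card α ^ (k - 2))
    (s : ZMod n → α)
    (hdb : ∀ w : List α, w.length = k - 2 → ∃! i : ZMod n, circSub s i (k - 2) = w)
    (X : List α) (hX : X = (List.range (n + k)).map (fun j => s (j : ZMod n))) :
    X.take k = (X.drop n).take k ∧
    (∀ i j : ℕ, i + k ≤ X.length → j + k ≤ X.length →
      (X.drop i).take k = (X.drop j).take k →
      i = j ∨ (i = 0 ∧ j = n) ∨ (i = n ∧ j = 0)) ∧
    (specK k {X}).card = n ∧
    ∃ f : ZMod n → List α, Function.Injective f ∧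
      (∀ w : List α, w ∈ specK k {X} ↔ ∃ i : ZMod n, f i = w) ∧
      (∀ i j : ZMod n,
        ((f i).drop ((f i).length - (k - 1)) = (f j).take (k - 1)) ↔ j = i + 1) := by
  have hn0 : 0 < n := by
    rw [hn]; exact pow_pos (by omega) _
  haveI : NeZero n := ⟨hn0.ne'⟩
  -- X equals the circular substring starting at 0 of length n + k
  have hXc : X = circSub s 0 (n + k) := by
    rw [hX, circSub_eq]
    show List.map _ (List.flatMap _ _) = _
    simp only [List.pure_def]
    rw [flatMap_cast, List.map_map]
    simp [Function.comp]
  have hXlen : X.length = n + k := by rw [hXc, circSub_length]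
  -- the k-mer at each position is a circular substring
  have hA : ∀ i m : ℕ, i + m ≤ n + k → (X.drop i).take m = circSub s ((i : ℕ) : ZMod n) m := by
    intro i m him
    apply List.ext_getElem
    · simp only [List.length_take, List.length_drop, hXlen, circSub_length]; omega
    · intro j h1 h2
      rw [List.getElem_take, List.getElem_drop, List.getElem_of_eq hXc,
        circSub_getElem, circSub_getElem]
      congr 1
      push_cast
      ring
  -- uniqueness of occurrences
  have huniq : ∀ i j : ZMod n, circSub s i (k-2) = circSub s j (k-2) → i = j := by
    intro i j h
    obtain ⟨c, -, hc⟩ := hdb (circSub s j (k-2)) (circSub_length s j (k-2))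
    exact (hc i h).trans (hc j rfl).symm
  have hkey : ∀ i j : ZMod n, circSub s i k = circSub s j k → i = j := by
    intro i j h
    apply huniq
    rw [← circSub_take s i (show k-2 ≤ k by omega), ← circSub_take s j (show k-2 ≤ k by omega), h]
  refine ⟨?_, ?_, ?_, ?_⟩
  · -- first and last k-mers coincide
    have h0 : X.take k = circSub s ((0 : ℕ) : ZMod n) k := by
      have := hA 0 k (by omega)
      rwa [List.drop_zero] at this
    have hN : (X.drop n).take k = circSub s ((n : ℕ) : ZMod n) k := hA n k (by omega)
    rw [h0, hN, Nat.cast_zero, ZMod.natCast_self]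
  · -- distinctness
    intro i j hi hj heq
    rw [hXlen] at hi hj
    have e : ((i : ℕ) : ZMod n) = ((j : ℕ) : ZMod n) := by
      apply hkey
      rw [← hA i k hi, ← hA j k hj, heq]
    have hmod : i % n = j % n := (ZMod.natCast_eq_natCast_iff i j n).mp e
    rcases Nat.lt_or_ge i n with hi' | hi'
    · rcases Nat.lt_or_ge j n with hj' | hj'
      · left; rwa [Nat.mod_eq_of_lt hi', Nat.mod_eq_of_lt hj'] at hmod
      · have hj'' : j = n := by omega
        rw [Nat.mod_eq_of_lt hi', hj'', Nat.mod_self] at hmod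
        exact Or.inr (Or.inl ⟨hmod, hj''⟩)
    · have hi'' : i = n := by omega
      rcases Nat.lt_or_ge j n with hj' | hj'
      · rw [hi'', Nat.mod_self, Nat.mod_eq_of_lt hj'] at hmod
        exact Or.inr (Or.inr ⟨hi'', hmod.symm⟩)
      · have hj'' : j = n := by omega
        exact Or.inl (hi''.trans hj''.symm)
  all_goals {
    have finj : Function.Injective (fun i : ZMod n => circSub s i k) := fun i j h => hkey i j h
    have hmem : ∀ w, w ∈ specK k ({X} : Finset (List α)) ↔
        ∃ i : ZMod n, circSub s i k = w := by
      intro w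
      simp only [specK, Finset.mem_biUnion, Finset.mem_singleton, List.mem_toFinset,
        kmerList, List.mem_map, List.mem_range]
      constructor
      · rintro ⟨t, rfl, i, hi, rfl⟩
        rw [hXlen] at hi
        exact ⟨((i : ℕ) : ZMod n), (hA i k (by omega)).symm⟩
      · rintro ⟨i, rfl⟩
        refine ⟨X, rfl, i.val, ?_, ?_⟩
        · rw [hXlen]; have := ZMod.val_lt i; omega
        · rw [hA i.val k (by have := ZMod.val_lt i; omega)]
          congr 1
          exact ZMod.natCast_rightInverse i
    first
    | · -- cardinality
        have hset : specK k ({X} : Finset (List α)) =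
            Finset.image (fun i : ZMod n => circSub s i k) Finset.univ := by
          ext w
          rw [hmem, Finset.mem_image]
          simp
        rw [hset, Finset.card_image_of_injective _ finj, Finset.card_univ, ZMod.card]
    | · -- the graph is a cycle
        refine ⟨fun i : ZMod n => circSub s i k, finj, hmem, ?_⟩
        intro i j
        simp only
        rw [circSub_length, show k - (k - 1) = 1 by omega, circSub_drop_one,
          circSub_take s j (Nat.sub_le k 1)]
        constructor
        · intro h
          refine (huniq (i+1) j ?_).symm
          rw [← circSub_take s (i+1) (show k-2 ≤ k-1 by omega),
            ← circSub_take s j (show k-2 ≤ k-1 by omega), h]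
        · rintro rfl
          rfl
  }
end

section
/- For every integer k ≥ 4, setting n = 4^{k−2}, there exists a finite set I of strings over the four-letter alphabet {A, C, G, T} with exactly 2n distinct k-mers such that the order-k node-centric de Bruijn graph of I is isomorphic to the graph G_n consisting of a directed n-cycle with one pendant out-neighbor attached to each cycle vertex, and consequently every no-repetition SPSS of I has weight at least 2n + (k − 1)·n = (k + 1)·n. -/
set_option maxHeartbeats 1000000 in
set_option synthInstance.maxHeartbeats 400000 in
theorem exists_window_seq (M : ℕ) (hM : 2 ≤ M) :
    ∃ u : ℕ → ZMod 2,
      (∀ i, u i = u (i % 2 ^ M)) ∧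
      ∀ a b : ℕ, (∀ j, j < M → u (a + j) = u (b + j)) → a % 2 ^ M = b % 2 ^ M := by
  haveI : Fact (Nat.Prime 2) := ⟨Nat.prime_two⟩
  classical
  have hMpow : M < 2 ^ M := Nat.lt_two_pow_self (n := M)
  haveI : Fintype (GaloisField 2 M) := Fintype.ofFinite _
  obtain ⟨g, hg⟩ := IsCyclic.exists_generator (α := (GaloisField 2 M)ˣ)
  have hcard : Fintype.card (GaloisField 2 M) = 2 ^ M := by
    rw [← Nat.card_eq_fintype_card]; exact GaloisField.card 2 M (by omega)
  have horder : orderOf g = 2 ^ M - 1 := by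
    rw [orderOf_eq_card_of_forall_mem_zpowers hg, Nat.card_eq_fintype_card,
      Fintype.card_units, hcard]
  have hfr : Module.finrank (ZMod 2) (GaloisField 2 M) = M := by
    have h2 : Fintype.card (GaloisField 2 M) = 2 ^ Module.finrank (ZMod 2) (GaloisField 2 M) := by
      have := Module.card_eq_pow_finrank (K := ZMod 2) (V := GaloisField 2 M)
      simpa [ZMod.card] using this
    exact (Nat.pow_right_injective (le_refl 2) (hcard.symm.trans h2).symm)
  have htop : Algebra.adjoin (ZMod 2) {(g : GaloisField 2 M)} = ⊤ := by
    rw [eq_top_iff]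
    rintro y -
    rcases eq_or_ne y 0 with rfl | hy
    · exact Subalgebra.zero_mem _
    · obtain ⟨yu, rfl⟩ := hy.isUnit
      obtain ⟨n, hn⟩ := (mem_powers_iff_mem_zpowers).2 (hg yu)
      simp only at hn
      have h2 : (g : GaloisField 2 M) ^ n = (yu : GaloisField 2 M) := by
        rw [← Units.val_pow_eq_pow_val, hn]
      rw [← h2]
      exact pow_mem (Algebra.subset_adjoin (Set.mem_singleton _)) n
  have hint : IsIntegral (ZMod 2) (g : GaloisField 2 M) := IsIntegral.of_finite _ _
  let pbF : PowerBasis (ZMod 2) (GaloisField 2 M) :=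
    (Algebra.adjoin.powerBasis hint).map ((Subalgebra.equivOfEq _ _ htop).trans Subalgebra.topEquiv)
  have hgen : pbF.gen = (g : GaloisField 2 M) := by
    simp [pbF, PowerBasis.map_gen]
  have hdim : pbF.dim = M := by rw [← pbF.finrank, hfr]
  let B : Module.Basis (Fin M) (ZMod 2) (GaloisField 2 M) := pbF.basis.reindex (finCongr hdim)
  have hB : ∀ i : Fin M, B i = (g : GaloisField 2 M) ^ (i : ℕ) := by
    intro i
    simp [B, Module.Basis.reindex_apply, pbF.basis_eq_pow, hgen]
  set φ : GaloisField 2 M →ₗ[ZMod 2] ZMod 2 := B.coord ⟨M - 1, by omega⟩ with hφdef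
  have hφB : ∀ i : Fin M, φ (B i) = if i = ⟨M - 1, by omega⟩ then 1 else 0 := by
    intro i
    rw [hφdef, Module.Basis.coord_apply, B.repr_self, Finsupp.single_apply]
  have tval0 : ∀ i, i + 1 < M → φ ((g : GaloisField 2 M) ^ i) = 0 := by
    intro i hi
    have h := hφB ⟨i, by omega⟩
    rw [hB ⟨i, by omega⟩, if_neg (by simp only [Fin.mk.injEq]; omega)] at h
    exact h
  have tval1 : φ ((g : GaloisField 2 M) ^ (M - 1)) = 1 := by
    have := hφB ⟨M - 1, by omega⟩
    rw [hB ⟨M - 1, by omega⟩] at this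
    simpa using this
  have core : ∀ x : GaloisField 2 M,
      (∀ j, j < M → φ ((g : GaloisField 2 M) ^ j * x) = 0) → x = 0 := by
    intro x hx
    by_contra h0
    have hψ : (φ ∘ₗ LinearMap.mulRight (ZMod 2) x) = 0 := by
      apply B.ext
      intro i
      simp only [LinearMap.comp_apply, LinearMap.mulRight_apply, LinearMap.zero_apply, hB i]
      exact hx i i.isLt
    have hone := congrArg (fun ψ : GaloisField 2 M →ₗ[ZMod 2] ZMod 2 =>
      ψ ((g : GaloisField 2 M) ^ (M - 1) * x⁻¹)) hψ
    simp only [LinearMap.comp_apply, LinearMap.mulRight_apply, LinearMap.zero_apply,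
      mul_assoc, inv_mul_cancel₀ h0, mul_one] at hone
    rw [tval1] at hone
    exact one_ne_zero hone
  -- the m-sequence
  set P : ℕ := 2 ^ M - 1 with hPdef
  have hP2 : 2 ^ M = P + 1 := by
    have : 1 ≤ 2 ^ M := Nat.one_le_two_pow
    omega
  set t : ℕ → ZMod 2 := fun i => φ ((g : GaloisField 2 M) ^ i) with htdef
  have hgP : (g : GaloisField 2 M) ^ P = 1 := by
    have : g ^ P = 1 := by rw [← horder]; exact pow_orderOf_eq_one g
    calc (g : GaloisField 2 M) ^ P = ((g ^ P : _ˣ) : GaloisField 2 M) := by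
          rw [Units.val_pow_eq_pow_val]
      _ = 1 := by rw [this]; rfl
  have tper : ∀ i, t (i + P) = t i := by
    intro i
    simp only [htdef]
    rw [pow_add, hgP, mul_one]
  have tinj : ∀ a b, a < P → b < P → (∀ j, j < M → t (a + j) = t (b + j)) → a = b := by
    intro a b ha hb hw
    have hx : (g : GaloisField 2 M) ^ a - (g : GaloisField 2 M) ^ b = 0 := by
      apply core
      intro j hj
      rw [mul_sub]
      rw [← pow_add, ← pow_add]
      have e1 : j + a = a + j := by omega
      have e2 : j + b = b + j := by omega
      rw [e1, e2]
      have := hw j hj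
      simp only [htdef] at this
      rw [map_sub, this, sub_self]
    have hpow : g ^ a = g ^ b := by
      apply Units.ext
      rw [Units.val_pow_eq_pow_val, Units.val_pow_eq_pow_val]
      exact sub_eq_zero.mp hx
    have := pow_eq_pow_iff_modEq.mp hpow
    rw [horder] at this
    simpa [Nat.ModEq, Nat.mod_eq_of_lt ha, Nat.mod_eq_of_lt hb] using this
  have tnonzero : ∀ a, ¬ (∀ j, j < M → t (a + j) = 0) := by
    intro a hz
    have : (g : GaloisField 2 M) ^ a = 0 := by
      apply core
      intro j hj
      rw [← pow_add]
      have : j + a = a + j := by omega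
      rw [this]
      exact hz j hj
    exact pow_ne_zero a (Units.ne_zero g) this
  -- the spliced sequence
  set u : ℕ → ZMod 2 := fun i => if i % 2 ^ M = 0 then 0 else t (i % 2 ^ M - 1) with hudef
  have umod : ∀ i, u i = u (i % 2 ^ M) := by
    intro i
    simp only [hudef, Nat.mod_mod_of_dvd _ (dvd_refl (2 ^ M))]
  have glue : ∀ a, 1 ≤ a → a < 2 ^ M → ∀ j, j < M → u (a + j) = t (a - 1 + j) := by
    intro a ha1 ha2 j hj
    by_cases h : a + j < 2 ^ M
    · have hmod : (a + j) % 2 ^ M = a + j := Nat.mod_eq_of_lt h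
      simp only [hudef, hmod, if_neg (by omega : ¬ (a + j = 0))]
      congr 1
      omega
    · have hr : (a + j) % 2 ^ M = a + j - 2 ^ M := by
        rw [Nat.mod_eq_sub_mod (by omega)]
        exact Nat.mod_eq_of_lt (by omega)
      set r : ℕ := a + j - 2 ^ M with hrdef
      have hrle : r ≤ M - 2 := by omega
      rcases Nat.eq_zero_or_pos r with hr0 | hrpos
      · simp only [hudef, hr, hr0, if_pos rfl]
        have : a - 1 + j = 0 + P := by omega
        rw [this, tper]
        exact (tval0 0 (by omega)).symm
      · simp only [hudef, hr, if_neg (by omega : ¬ (r = 0))]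
        have h1 : t (r - 1) = 0 := tval0 (r - 1) (by omega)
        have h2 : t (a - 1 + j) = 0 := by
          have : a - 1 + j = r + P := by omega
          rw [this, tper]
          exact tval0 r (by omega)
        rw [h1, h2]
  have uzero : ∀ j, j < M → u (0 + j) = 0 := by
    intro j hj
    rcases Nat.eq_zero_or_pos j with rfl | hjpos
    · simp [hudef]
    · have hmod : (0 + j) % 2 ^ M = j := by
        rw [Nat.zero_add]; exact Nat.mod_eq_of_lt (by omega)
      simp only [hudef, hmod, if_neg (by omega : ¬ (j = 0))]
      exact tval0 (j - 1) (by omega)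
  have key : ∀ a b, a < 2 ^ M → b < 2 ^ M → (∀ j, j < M → u (a + j) = u (b + j)) → a = b := by
    intro a b ha hb hw
    rcases Nat.eq_zero_or_pos a with rfl | hapos
    · rcases Nat.eq_zero_or_pos b with rfl | hbpos
      · rfl
      · exfalso
        apply tnonzero (b - 1)
        intro j hj
        rw [← glue b hbpos hb j hj, ← hw j hj]
        exact uzero j hj
    · rcases Nat.eq_zero_or_pos b with rfl | hbpos
      · exfalso
        apply tnonzero (a - 1)
        intro j hj
        rw [← glue a hapos ha j hj, hw j hj]
        exact uzero j hj
      · have := tinj (a - 1) (b - 1) (by omega) (by omega) (fun j hj => by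
          rw [← glue a hapos ha j hj, ← glue b hbpos hb j hj]
          exact hw j hj)
        omega
  refine ⟨u, umod, ?_⟩
  intro a b hw
  have ha' : a % 2 ^ M < 2 ^ M := Nat.mod_lt _ (by positivity)
  have hb' : b % 2 ^ M < 2 ^ M := Nat.mod_lt _ (by positivity)
  apply key _ _ ha' hb'
  intro j hj
  have e1 : (a % 2 ^ M + j) % 2 ^ M = (a + j) % 2 ^ M := (Nat.mod_modEq a (2 ^ M)).add_right j
  have e2 : (b % 2 ^ M + j) % 2 ^ M = (b + j) % 2 ^ M := (Nat.mod_modEq b (2 ^ M)).add_right j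
  rw [umod (a % 2 ^ M + j), e1, ← umod (a + j), umod (b % 2 ^ M + j), e2, ← umod (b + j)]
  exact hw j hj
def enc (a b : ZMod 2) : Fin 4 :=
  ⟨2 * a.val + b.val, by have ha := a.val_lt; have hb := b.val_lt; omega⟩

lemma enc_inj : ∀ {a b a' b' : ZMod 2}, enc a b = enc a' b' → a = a' ∧ b = b' := by decide

def sig (u : ℕ → ZMod 2) (i : ℕ) : Fin 4 := enc (u (2*i)) (u (2*i+1))

def win (u : ℕ → ZMod 2) (len i : ℕ) : List (Fin 4) :=
  (List.range len).map (fun j => sig u (i+j))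

def GoodSeq (m : ℕ) (u : ℕ → ZMod 2) : Prop :=
  (∀ i, u i = u (i % 2 ^ (2*m+1))) ∧
  ∀ a b : ℕ, (∀ j, j < 2*m+1 → u (a + j) = u (b + j)) → a % 2 ^ (2*m+1) = b % 2 ^ (2*m+1)

lemma pow2eq (m : ℕ) : 2 ^ (2*m+1) = 2 * 4 ^ m := by
  rw [pow_succ, pow_mul]; ring

lemma odd_mod (a N : ℕ) (hN : 0 < N) : (2*a+1) % (2*N) = 2*(a % N) + 1 := by
  obtain ⟨q, r, hr, rfl⟩ : ∃ q r, r < N ∧ a = N * q + r :=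
    ⟨a / N, a % N, Nat.mod_lt _ hN, (Nat.div_add_mod a N).symm⟩
  rw [show 2*(N*q+r)+1 = (2*r+1) + q*(2*N) by ring, Nat.add_mul_mod_self_right,
    Nat.mod_eq_of_lt (by omega), Nat.mul_add_mod, Nat.mod_eq_of_lt hr]

section
variable {m : ℕ} {u : ℕ → ZMod 2}

lemma sig_congr (h : GoodSeq m u) {a b : ℕ} (hab : a % 4^m = b % 4^m) :
    sig u a = sig u b := by
  have hN : 0 < 4^m := by positivity
  have h1 : u (2*a) = u (2*b) := by
    rw [h.1 (2*a), h.1 (2*b), pow2eq, Nat.mul_mod_mul_left, Nat.mul_mod_mul_left, hab]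
  have h2 : u (2*a+1) = u (2*b+1) := by
    rw [h.1 (2*a+1), h.1 (2*b+1), pow2eq, odd_mod _ _ hN, odd_mod _ _ hN, hab]
  simp [sig, h1, h2]

lemma sig_inj (h : GoodSeq m u) {a b : ℕ} (hw : ∀ j, j ≤ m → sig u (a+j) = sig u (b+j)) :
    a % 4^m = b % 4^m := by
  have hu : ∀ j', j' < 2*m+1 → u (2*a + j') = u (2*b + j') := by
    intro j' hj'
    have hq : j'/2 ≤ m := by omega
    have hs := hw (j'/2) hq
    have hbits := enc_inj (show enc (u (2*(a + j'/2))) (u (2*(a + j'/2)+1)) =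
      enc (u (2*(b + j'/2))) (u (2*(b + j'/2)+1)) from hs)
    rcases Nat.even_or_odd j' with ⟨t, rfl⟩ | ⟨t, rfl⟩
    · rw [show 2*a + (t+t) = 2*(a + (t+t)/2) by omega,
        show 2*b + (t+t) = 2*(b + (t+t)/2) by omega]
      exact hbits.1
    · rw [show 2*a + (2*t+1) = 2*(a + (2*t+1)/2)+1 by omega,
        show 2*b + (2*t+1) = 2*(b + (2*t+1)/2)+1 by omega]
      exact hbits.2
  have := h.2 (2*a) (2*b) hu
  rw [pow2eq, Nat.mul_mod_mul_left, Nat.mul_mod_mul_left] at this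
  omega

lemma win_length (len i : ℕ) : (win u len i).length = len := by simp [win]

lemma win_eq_iff {len a b : ℕ} :
    win u len a = win u len b ↔ ∀ j, j < len → sig u (a+j) = sig u (b+j) := by
  rw [win, win, List.map_inj_left]
  constructor
  · intro h j hj; exact h j (List.mem_range.mpr hj)
  · intro h j hj; exact h j (List.mem_range.mp hj)

lemma win_congr (h : GoodSeq m u) {a b : ℕ} (hab : a % 4^m = b % 4^m) (len : ℕ) :
    win u len a = win u len b := by
  rw [win_eq_iff]
  intro j hj
  exact sig_congr h (Nat.ModEq.add_right j hab)

lemma win_iff (h : GoodSeq m u) {len a b : ℕ} (hlen : m+1 ≤ len) :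
    win u len a = win u len b ↔ a % 4^m = b % 4^m := by
  constructor
  · intro hw
    exact sig_inj h (fun j hj => (win_eq_iff.mp hw) j (by omega))
  · intro hab; exact win_congr h hab len

lemma win_take {q len : ℕ} (i : ℕ) (h : q ≤ len) : (win u len i).take q = win u q i := by
  rw [win, win, ← List.map_take, List.take_range, Nat.min_eq_left h]

lemma win_drop {q len : ℕ} (i : ℕ) (h : q ≤ len) :
    (win u len i).drop q = win u (len - q) (i + q) := by
  apply List.ext_getElem
  · simp [win]
  · intro n h1 h2
    simp only [win, List.getElem_drop, List.getElem_map, List.getElem_range]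
    congr 1
    omega

lemma win_succ (len i : ℕ) : win u (len+1) i = win u len i ++ [sig u (i+len)] := by
  rw [win, win, List.range_succ, List.map_append, List.map_cons, List.map_nil]

end

section
variable {m : ℕ} {u : ℕ → ZMod 2}

lemma win_dec {q : ℕ} {c : Fin 4} {x : ℕ} (hqc : win u (m+1) q = win u m x ++ [c]) :
    (∀ r, r < m → sig u (q+r) = sig u (x+r)) ∧ sig u (q+m) = c := by
  rw [win_succ] at hqc
  obtain ⟨h1, h2⟩ := List.append_inj hqc (by simp [win_length])
  refine ⟨fun r hr => win_eq_iff.mp h1 r hr, ?_⟩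
  simpa using h2

lemma pendc_exists (h : GoodSeq m u) (i : ℕ) :
    ∃ c : Fin 4, ∀ q : ℕ, win u (m+1) q ≠ win u m (i+2) ++ [c] := by
  by_contra hc
  push_neg at hc
  obtain ⟨q0, hq0⟩ := hc (enc 0 0)
  obtain ⟨q1, hq1⟩ := hc (enc 0 1)
  have b0 := win_dec hq0
  have b1 := win_dec hq1
  have hu : ∀ j', j' < 2*m+1 → u (2*q0 + j') = u (2*q1 + j') := by
    intro j' hj'
    by_cases hj : j' < 2*m
    · have hq : j'/2 < m := by omega
      have h0 := enc_inj (show enc (u (2*(q0 + j'/2))) (u (2*(q0 + j'/2)+1)) =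
        enc (u (2*(i+2 + j'/2))) (u (2*(i+2 + j'/2)+1)) from b0.1 (j'/2) hq)
      have h1 := enc_inj (show enc (u (2*(q1 + j'/2))) (u (2*(q1 + j'/2)+1)) =
        enc (u (2*(i+2 + j'/2))) (u (2*(i+2 + j'/2)+1)) from b1.1 (j'/2) hq)
      rcases Nat.even_or_odd j' with ⟨t, rfl⟩ | ⟨t, rfl⟩
      · rw [show 2*q0 + (t+t) = 2*(q0 + (t+t)/2) by omega,
          show 2*q1 + (t+t) = 2*(q1 + (t+t)/2) by omega, h0.1, h1.1]
      · rw [show 2*q0 + (2*t+1) = 2*(q0 + (2*t+1)/2)+1 by omega,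
          show 2*q1 + (2*t+1) = 2*(q1 + (2*t+1)/2)+1 by omega, h0.2, h1.2]
    · have hj2 : j' = 2*m := by omega
      have e0 := (enc_inj (show enc (u (2*(q0+m))) (u (2*(q0+m)+1)) = enc 0 0 from b0.2)).1
      have e1 := (enc_inj (show enc (u (2*(q1+m))) (u (2*(q1+m)+1)) = enc 0 1 from b1.2)).1
      rw [hj2, show 2*q0+2*m = 2*(q0+m) by ring, show 2*q1+2*m = 2*(q1+m) by ring, e0, e1]
  have hmod := h.2 (2*q0) (2*q1) hu
  rw [pow2eq, Nat.mul_mod_mul_left, Nat.mul_mod_mul_left] at hmod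
  have hqq : q0 % 4^m = q1 % 4^m := by omega
  have hs := sig_congr h (Nat.ModEq.add_right m hqq)
  rw [b0.2, b1.2] at hs
  exact (by decide : (enc 0 0 : Fin 4) ≠ enc 0 1) hs

end

open Classical in
noncomputable def pendc (m : ℕ) (u : ℕ → ZMod 2) (i : ℕ) : Fin 4 :=
  if h : ∃ c : Fin 4, ∀ q : ℕ, win u (m+1) q ≠ win u m (i+2) ++ [c] then h.choose else 0

lemma pendc_spec {m : ℕ} {u : ℕ → ZMod 2} (h : GoodSeq m u) (i q : ℕ) :
    win u (m+1) q ≠ win u m (i+2) ++ [pendc m u i] := by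
  have hex := pendc_exists h i
  unfold pendc
  rw [dif_pos hex]
  exact hex.choose_spec q

noncomputable def pend (m : ℕ) (u : ℕ → ZMod 2) (i : ℕ) : List (Fin 4) :=
  win u (m+1) (i+1) ++ [pendc m u i]

lemma pend_length {m : ℕ} {u : ℕ → ZMod 2} (i : ℕ) : (pend m u i).length = m+2 := by
  simp [pend, win_length]

lemma pend_take {m : ℕ} {u : ℕ → ZMod 2} (i : ℕ) :
    (pend m u i).take (m+1) = win u (m+1) (i+1) := by
  rw [pend, List.take_left' (win_length _ _)]

lemma pend_drop {m : ℕ} {u : ℕ → ZMod 2} (i : ℕ) :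
    (pend m u i).drop 1 = win u m (i+2) ++ [pendc m u i] := by
  rw [pend, List.drop_append_of_le_length (by simp [win_length]),
    win_drop _ (by omega)]
  norm_num

lemma vstr_ne_pend {m : ℕ} {u : ℕ → ZMod 2} (h : GoodSeq m u) (p j : ℕ) :
    win u (m+2) p ≠ pend m u j := by
  intro he
  rw [pend, show m+2 = (m+1)+1 from rfl, win_succ] at he
  obtain ⟨h1, h2⟩ := List.append_inj he (by simp [win_length])
  have h2' : sig u (p+(m+1)) = pendc m u j := by simpa using h2
  apply pendc_spec h j (p+1)
  rw [win_succ]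
  have hm : win u m (p+1) = win u m (j+2) := by
    rw [win_eq_iff]
    intro r hr
    have := win_eq_iff.mp h1 (r+1) (by omega)
    rw [show p+(r+1) = p+1+r by omega, show j+1+(r+1) = j+2+r by omega] at this
    exact this
  rw [hm, show p+1+m = p+(m+1) by omega, h2']


lemma toFinset_map_range {α : Type*} [DecidableEq α] (N : ℕ) (f : ℕ → α) :
    ((List.range N).map f).toFinset = (Finset.range N).image f := by
  ext x
  simp

theorem stmt14 (k : ℕ) (hk : 4 ≤ k) :
    ∃ I : Finset (List (Fin 4)),
      (specK k I).card = 2 * 4 ^ (k - 2) ∧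
      (∃ f : (ZMod (4 ^ (k - 2)) ⊕ ZMod (4 ^ (k - 2))) → List (Fin 4),
        Function.Injective f ∧
        (∀ w : List (Fin 4), w ∈ specK k I ↔ ∃ x, f x = w) ∧
        (∀ x y, ((f x).drop ((f x).length - (k - 1)) = (f y).take (k - 1)) ↔
          ((∃ i : ZMod (4 ^ (k - 2)), x = Sum.inl i ∧ y = Sum.inl (i + 1)) ∨
           (∃ i : ZMod (4 ^ (k - 2)), x = Sum.inl i ∧ y = Sum.inr i)))) ∧
      ∀ S : Finset (List (Fin 4)), IsNoRepSPSS k I S →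
        (k + 1) * 4 ^ (k - 2) ≤ ∑ t ∈ S, t.length := by
  obtain ⟨m, rfl⟩ : ∃ m, k = m + 2 := ⟨k - 2, by omega⟩
  have hm : 2 ≤ m := by omega
  simp only [show m + 2 - 2 = m from rfl]
  obtain ⟨u, hu1, hu2⟩ := exists_window_seq (2*m+1) (by omega)
  have hg : GoodSeq m u := ⟨hu1, hu2⟩
  set N := 4 ^ m with hN
  have hN1 : m + 2 < N := by
    calc m + 2 < 2 ^ (m + 2) := Nat.lt_two_pow_self
    _ ≤ 4 ^ (m + 2 - 2) := by
        rw [show (4:ℕ) = 2^2 by norm_num, ← pow_mul]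
        exact Nat.pow_le_pow_right (by norm_num) (by omega)
    _ = N := by rw [hN, Nat.add_sub_cancel]
  haveI : NeZero N := ⟨by positivity⟩
  set T : List (Fin 4) := win u (N + (m+1)) 0 with hT
  set I0 : Finset (List (Fin 4)) :=
    insert T ((Finset.range N).image (fun i => pend m u i)) with hI0
  -- kmer lists
  have hlist : kmerList (m+2) T = (List.range N).map (fun i => win u (m+2) i) := by
    rw [kmerList, hT, win_length, show N + (m+1) + 1 - (m+2) = N by omega]
    apply List.map_inj_left.mpr
    intro i hi
    rw [List.mem_range] at hi
    rw [win_drop _ (by omega), win_take _ (by omega), Nat.zero_add]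
  have hkP : ∀ i : ℕ, kmerList (m+2) (pend m u i) = [pend m u i] := by
    intro i
    rw [kmerList, pend_length, show m + 2 + 1 - (m+2) = 1 by omega]
    rw [show List.range 1 = [0] from rfl, List.map_cons, List.map_nil, List.drop_zero,
      List.take_of_length_le (le_of_eq (pend_length i))]
  have hspec : specK (m+2) I0 = (Finset.range N).image (fun i => win u (m+2) i) ∪
      (Finset.range N).image (fun i => pend m u i) := by
    rw [hI0, specK, Finset.biUnion_insert]
    congr 1
    · rw [hlist, toFinset_map_range]
    · ext w
      simp only [Finset.mem_biUnion, Finset.mem_image, Finset.mem_range]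
      constructor
      · rintro ⟨s, ⟨i, hi, rfl⟩, hw⟩
        rw [hkP i] at hw
        simp at hw
        exact ⟨i, hi, hw.symm⟩
      · rintro ⟨i, hi, rfl⟩
        exact ⟨pend m u i, ⟨i, hi, rfl⟩, by rw [hkP i]; simp⟩
  -- injectivity facts
  have hvv : ∀ a b : ℕ, win u (m+2) a = win u (m+2) b ↔ a % N = b % N :=
    fun a b => win_iff hg (by omega)
  have hww : ∀ a b : ℕ, win u (m+1) a = win u (m+1) b ↔ a % N = b % N :=
    fun a b => win_iff hg (by omega)
  have hpp : ∀ a b : ℕ, pend m u a = pend m u b → (a+1) % N = (b+1) % N := by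
    intro a b hab
    rw [pend, pend] at hab
    obtain ⟨h1, -⟩ := List.append_inj hab (by simp [win_length])
    exact (hww _ _).mp h1
  have hcast : ∀ a b : ℕ, a % N = b % N ↔ ((a : ZMod N) = (b : ZMod N)) :=
    fun a b => (ZMod.natCast_eq_natCast_iff' a b N).symm
  have hvalcast : ∀ x : ZMod N, ((x.val : ℕ) : ZMod N) = x :=
    fun x => ZMod.natCast_rightInverse x
  set f0 : (ZMod N ⊕ ZMod N) → List (Fin 4) :=
    Sum.elim (fun i : ZMod N => win u (m+2) i.val) (fun i : ZMod N => pend m u i.val) with hf0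
  have finj : Function.Injective f0 := by
    rintro (a|a) (b|b) hab <;> simp only [hf0, Sum.elim_inl, Sum.elim_inr] at hab
    · have h2 := (hvv _ _).mp hab
      rw [Nat.mod_eq_of_lt (ZMod.val_lt a), Nat.mod_eq_of_lt (ZMod.val_lt b)] at h2
      rw [show a = b from by rw [← hvalcast a, ← hvalcast b, h2]]
    · exact absurd hab (vstr_ne_pend hg _ _)
    · exact absurd hab.symm (vstr_ne_pend hg _ _)
    · have h2 : a.val % N = b.val % N := Nat.ModEq.add_right_cancel' 1 (hpp _ _ hab)
      rw [Nat.mod_eq_of_lt (ZMod.val_lt a), Nat.mod_eq_of_lt (ZMod.val_lt b)] at h2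
      rw [show a = b from by rw [← hvalcast a, ← hvalcast b, h2]]
  have fmem : ∀ w : List (Fin 4), w ∈ specK (m+2) I0 ↔ ∃ x, f0 x = w := by
    intro w
    rw [hspec]
    simp only [Finset.mem_union, Finset.mem_image, Finset.mem_range]
    constructor
    · rintro (⟨i, hi, rfl⟩ | ⟨i, hi, rfl⟩)
      · exact ⟨Sum.inl (i : ZMod N), by simp [hf0, ZMod.val_cast_of_lt hi]⟩
      · exact ⟨Sum.inr (i : ZMod N), by simp [hf0, ZMod.val_cast_of_lt hi]⟩
    · rintro ⟨(a|a), rfl⟩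
      · exact Or.inl ⟨a.val, ZMod.val_lt a, rfl⟩
      · exact Or.inr ⟨a.val, ZMod.val_lt a, rfl⟩
  have fadj : ∀ x y : ZMod N ⊕ ZMod N,
      ((f0 x).drop ((f0 x).length - (m + 2 - 1)) = (f0 y).take (m + 2 - 1)) ↔
      ((∃ i : ZMod N, x = Sum.inl i ∧ y = Sum.inl (i + 1)) ∨
       (∃ i : ZMod N, x = Sum.inl i ∧ y = Sum.inr i)) := by
    have hmm1 : m + 2 - 1 = m + 1 := rfl
    rintro (a|a) (b|b)
    · simp only [hf0, Sum.elim_inl]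
      rw [win_length, show m + 2 - (m + 2 - 1) = 1 by omega,
        win_drop _ (by omega), win_take _ (by omega), hmm1]
      constructor
      · intro hw
        have h2 := (hww _ _).mp hw
        rw [hcast] at h2
        push_cast at h2
        rw [hvalcast, hvalcast] at h2
        exact Or.inl ⟨a, rfl, by rw [← h2]⟩
      · rintro (⟨i, hi, hib⟩ | ⟨i, hi, hib⟩)
        · obtain rfl : a = i := by simpa using hi
          obtain rfl : b = a + 1 := by simpa using hib
          rw [hww, hcast]
          push_cast
          rw [hvalcast, hvalcast]
        · simp at hib
    · simp only [hf0, Sum.elim_inl, Sum.elim_inr]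
      rw [win_length, show m + 2 - (m + 2 - 1) = 1 by omega,
        win_drop _ (by omega), hmm1, pend_take]
      constructor
      · intro hw
        have h2 := (hww _ _).mp hw
        rw [hcast] at h2
        push_cast at h2
        rw [hvalcast, hvalcast] at h2
        exact Or.inr ⟨a, rfl, by rw [(add_right_cancel h2 : a = b)]⟩
      · rintro (⟨i, hi, hib⟩ | ⟨i, hi, hib⟩)
        · simp at hib
        · obtain rfl : a = i := by simpa using hi
          obtain rfl : b = a := by simpa using hib
          rfl
    · simp only [hf0, Sum.elim_inl, Sum.elim_inr]
      rw [pend_length, show m + 2 - (m + 2 - 1) = 1 by omega, pend_drop, hmm1,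
        win_take _ (by omega)]
      constructor
      · intro hw
        exact absurd hw.symm (pendc_spec hg a.val b.val)
      · rintro (⟨i, hi, hib⟩ | ⟨i, hi, hib⟩) <;> simp at hi
    · simp only [hf0, Sum.elim_inr]
      rw [pend_length, show m + 2 - (m + 2 - 1) = 1 by omega, pend_drop, hmm1, pend_take]
      constructor
      · intro hw
        exact absurd hw.symm (pendc_spec hg a.val (b.val+1))
      · rintro (⟨i, hi, hib⟩ | ⟨i, hi, hib⟩) <;> simp at hi
  have hcardspec : (specK (m+2) I0).card = 2 * N := by
    rw [hspec, Finset.card_union_of_disjoint, Finset.card_image_of_injOn,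
      Finset.card_image_of_injOn, Finset.card_range]
    · omega
    · intro a ha b hb hab
      simp only [Finset.coe_range, Set.mem_Iio] at ha hb
      have h2 : a % N = b % N := Nat.ModEq.add_right_cancel' 1 (hpp a b hab)
      rw [Nat.mod_eq_of_lt (by omega), Nat.mod_eq_of_lt (by omega)] at h2
      omega
    · intro a ha b hb hab
      simp only [Finset.coe_range, Set.mem_Iio] at ha hb
      have := (hvv a b).mp hab
      rw [Nat.mod_eq_of_lt (by omega), Nat.mod_eq_of_lt (by omega)] at this
      omega
    · rw [Finset.disjoint_left]
      intro w hw1 hw2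
      rw [Finset.mem_image] at hw1 hw2
      obtain ⟨i, -, rfl⟩ := hw1
      obtain ⟨j, -, hj⟩ := hw2
      exact vstr_ne_pend hg i j hj.symm
  refine ⟨I0, hcardspec, ⟨f0, finj, fmem, fadj⟩, ?_⟩
  intro S hS
  obtain ⟨h1, h2, h3, h4⟩ := hS
  have hend : ∀ s ∈ S, ∀ (j : ZMod N) (i : ℕ), i + (m+2) ≤ s.length →
      (s.drop i).take (m+2) = f0 (Sum.inr j) → i + (m+2) = s.length := by
    intro s hs j i hi hocc
    by_contra hne
    have hnext : (i+1) + (m+2) ≤ s.length := by omega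
    obtain ⟨y, hy⟩ := (fmem _).mp (h4 s hs (i+1) hnext)
    have hov : (f0 (Sum.inr j)).drop ((f0 (Sum.inr j)).length - (m + 2 - 1)) =
        (f0 y).take (m + 2 - 1) := by
      rw [← hocc, hy]
      have hlen : ((s.drop i).take (m+2)).length = m+2 := by
        rw [List.length_take, List.length_drop]
        omega
      rw [hlen, show m + 2 - (m + 2 - 1) = 1 by omega, List.drop_take, List.drop_drop,
        List.take_take]
      have hmin : (m+2-1) ⊓ (m+2) = m+2-1 := min_eq_left (by omega)
      rw [hmin]
    rcases (fadj _ _).mp hov with ⟨i', hi', -⟩ | ⟨i', hi', -⟩ <;> simp at hi'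
  have hchoose : ∀ j : ZMod N, ∃ (s : List (Fin 4)) (i : ℕ), s ∈ S ∧
      i + (m+2) ≤ s.length ∧ (s.drop i).take (m+2) = f0 (Sum.inr j) := by
    intro j
    obtain ⟨s, hs, i, hi, he⟩ := h2 _ ((fmem _).mpr ⟨Sum.inr j, rfl⟩)
    exact ⟨s, i, hs, hi, he⟩
  choose sf pf h1f h2f h3f using hchoose
  have hSinj : Function.Injective sf := by
    intro a b hab
    have ea := hend _ (h1f a) a _ (h2f a) (h3f a)
    have eb := hend _ (h1f b) b _ (h2f b) (h3f b)
    rw [hab] at ea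
    have hieq : pf a = pf b := by omega
    have heq2 : f0 (Sum.inr a) = f0 (Sum.inr b) := by
      rw [← h3f a, ← h3f b, hab, hieq]
    simpa using finj heq2
  have hNS : N ≤ S.card := by
    have := Finset.card_le_card_of_injOn (s := Finset.univ) sf (fun a _ => h1f a) hSinj.injOn
    simpa [Finset.card_univ, ZMod.card] using this
  have hcount : 2 * N ≤ ∑ t ∈ S, (t.length + 1 - (m+2)) := by
    have hchoose2 : ∀ w : List (Fin 4), w ∈ specK (m+2) I0 → ∃ (s : List (Fin 4)) (i : ℕ),
        s ∈ S ∧ i + (m+2) ≤ s.length ∧ (s.drop i).take (m+2) = w := by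
      intro w hw
      obtain ⟨s, hs, i, hi, he⟩ := h2 w hw
      exact ⟨s, i, hs, hi, he⟩
    choose! sf2 if2 hf2a hf2b hf2c using hchoose2
    have hmaps : ∀ w ∈ specK (m+2) I0, (⟨sf2 w, if2 w⟩ : Σ _ : List (Fin 4), ℕ) ∈
        S.sigma (fun t => Finset.range (t.length + 1 - (m+2))) := by
      intro w hw
      simp only [Finset.mem_sigma, Finset.mem_range]
      refine ⟨hf2a w hw, ?_⟩
      have := hf2b w hw
      have := h1 _ (hf2a w hw)
      omega
    have hinj2 : Set.InjOn (fun w => (⟨sf2 w, if2 w⟩ : Σ _ : List (Fin 4), ℕ))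
        (specK (m+2) I0 : Set (List (Fin 4))) := by
      intro w hw w' hw' he
      have e1 : sf2 w = sf2 w' := congrArg Sigma.fst he
      have e2 : if2 w = if2 w' :=
        congrArg (fun p : Σ _ : List (Fin 4), ℕ => p.snd) he
      rw [← hf2c w (Finset.mem_coe.mp hw), ← hf2c w' (Finset.mem_coe.mp hw'), e1, e2]
    have hle := Finset.card_le_card_of_injOn
      (fun w => (⟨sf2 w, if2 w⟩ : Σ _ : List (Fin 4), ℕ)) hmaps hinj2
    calc 2 * N = (specK (m+2) I0).card := hcardspec.symm
      _ ≤ (S.sigma (fun t => Finset.range (t.length + 1 - (m+2)))).card := hle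
      _ = ∑ t ∈ S, (t.length + 1 - (m+2)) := by
          rw [Finset.card_sigma]
          exact Finset.sum_congr rfl (fun t ht => Finset.card_range _)
  have hfin : ∑ t ∈ S, t.length = ∑ t ∈ S, ((t.length + 1 - (m+2)) + (m+1)) := by
    apply Finset.sum_congr rfl
    intro t ht
    have := h1 t ht
    omega
  rw [hfin, Finset.sum_add_distrib, Finset.sum_const, smul_eq_mul]
  calc (m+2+1) * N = 2*N + N*(m+1) := by ring
    _ ≤ (∑ t ∈ S, (t.length + 1 - (m+2))) + S.card * (m+1) :=
        Nat.add_le_add hcount (Nat.mul_le_mul_right _ hNS)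
end

section
/- Let G be a finite directed graph. For every necklace cover of G with N_O open necklaces and N_L pendant leaves, G admits a path-and-cycle cover with exactly N_O + N_L paths; consequently, the minimum number of paths p_min over all PC covers of G satisfies p_min ≤ N_O + N_L for every necklace cover of G. -/
open scoped Classical

variable {V : Type*} [DecidableEq V]

set_option linter.unusedSectionVars false
set_option maxHeartbeats 1000000

namespace NeckAux

/-- Iterate a partial function `n` times. -/
def iterO (f : V → Option V) : ℕ → V → Option V
  | 0, v => some v
  | n+1, v => (f v).bind (iterO f n)

@[simp] lemma iterO_zero (f : V → Option V) (v : V) : iterO f 0 v = some v := rfl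

lemma iterO_succ (f : V → Option V) (n : ℕ) (v : V) :
    iterO f (n+1) v = (f v).bind (iterO f n) := rfl

lemma iterO_add (f : V → Option V) (m n : ℕ) (v : V) :
    iterO f (m + n) v = (iterO f m v).bind (iterO f n) := by
  induction m generalizing v with
  | zero => simp [iterO]
  | succ m ih =>
      have : m + 1 + n = (m + n) + 1 := by omega
      rw [this, iterO_succ, iterO_succ]
      cases h : f v with
      | none => simp
      | some w => simp [ih]

lemma iterO_succ' (f : V → Option V) (n : ℕ) (v : V) :
    iterO f (n+1) v = (iterO f n v).bind f := by
  have := iterO_add f n 1 v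
  simpa [iterO] using this

lemma iterO_succ_some {f : V → Option V} {n : ℕ} {v x : V}
    (h : iterO f (n+1) v = some x) : ∃ y, iterO f n v = some y ∧ f y = some x := by
  rw [iterO_succ'] at h
  cases hy : iterO f n v with
  | none => rw [hy] at h; simp at h
  | some y => rw [hy] at h; exact ⟨y, rfl, h⟩

lemma iterO_some_of_le {f : V → Option V} {n : ℕ} {v x : V} :
    ∀ {m : ℕ}, m ≤ n → iterO f n v = some x → ∃ y, iterO f m v = some y := by
  induction n generalizing x with
  | zero => intro m hm h
            have : m = 0 := by omega
            subst this; exact ⟨v, rfl⟩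
  | succ n ih =>
      intro m hm h
      rcases Nat.lt_or_ge m (n+1) with hm' | hm'
      · obtain ⟨y, hy, -⟩ := iterO_succ_some h
        exact ih (by omega) hy
      · have : m = n + 1 := by omega
        subst this; exact ⟨x, h⟩

/-- Peeling with injectivity: equal iterates give a period at the base point. -/
lemma iterO_peel {f : V → Option V}
    (hinj : ∀ ⦃a b c : V⦄, f a = some c → f b = some c → a = b)
    {v : V} : ∀ {i j : ℕ} {x : V}, i ≤ j → iterO f i v = some x → iterO f j v = some x →
    iterO f (j - i) v = some v := by
  intro i
  induction i with
  | zero =>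
      intro j x _ h0 hj
      simp only [iterO_zero, Option.some.injEq] at h0
      subst h0; simpa using hj
  | succ i ih =>
      intro j x hij hi hj
      obtain ⟨j', rfl⟩ : ∃ j', j = j' + 1 := ⟨j - 1, by omega⟩
      obtain ⟨a, ha, hfa⟩ := iterO_succ_some hi
      obtain ⟨b, hb, hfb⟩ := iterO_succ_some hj
      have : a = b := hinj hfa hfb
      subst this
      have := ih (by omega) ha (hb)
      simpa [Nat.succ_sub_succ] using this

/-- `v` lies on a directed cycle of `f`. -/
def onCycle (f : V → Option V) (v : V) : Prop := ∃ k, 0 < k ∧ iterO f k v = some v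

lemma onCycle_shift {f : V → Option V} {v x : V} {k m : ℕ}
    (hk : iterO f k v = some v) (hm : iterO f m v = some x) :
    iterO f k x = some x := by
  have h1 : iterO f (m + k) v = iterO f k x := by
    rw [iterO_add, hm]; simp
  have h2 : iterO f (m + k) v = some x := by
    rw [Nat.add_comm m k, iterO_add, hk]; simpa using hm
  rw [h1] at h2; exact h2


lemma iterO_mul_period {f : V → Option V} {v : V} {k : ℕ}
    (hk : iterO f k v = some v) : ∀ t : ℕ, iterO f (k * t) v = some v := by
  intro t
  induction t with
  | zero => simp
  | succ t ih =>
      have : k * (t + 1) = k * t + k := by ring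
      rw [this, iterO_add, ih]; simpa using hk

lemma onCycle_defined {f : V → Option V} {v : V} (h : onCycle f v) (m : ℕ) :
    ∃ x, iterO f m v = some x ∧ onCycle f x := by
  obtain ⟨k, hk0, hk⟩ := h
  have hmul : iterO f (k * (m + 1)) v = some v := iterO_mul_period hk _
  have hle : m ≤ k * (m + 1) := by nlinarith
  obtain ⟨x, hx⟩ := iterO_some_of_le hle hmul
  exact ⟨x, hx, k, hk0, onCycle_shift hk hx⟩

lemma onCycle_f_some {f : V → Option V} {v : V} (h : onCycle f v) :
    ∃ w, f v = some w := by
  obtain ⟨k, hk0, hk⟩ := h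
  obtain ⟨k', rfl⟩ : ∃ k', k = k' + 1 := ⟨k - 1, by omega⟩
  rw [iterO_succ] at hk
  cases hw : f v with
  | none => rw [hw] at hk; simp at hk
  | some w => exact ⟨w, rfl⟩

lemma iterO_mod {f : V → Option V} {v : V} {k : ℕ} (hk0 : 0 < k)
    (hk : iterO f k v = some v) (i : ℕ) : iterO f i v = iterO f (i % k) v := by
  conv_lhs => rw [show i = k * (i / k) + i % k from (Nat.div_add_mod i k).symm ▸ rfl]
  rw [iterO_add, iterO_mul_period hk]
  simp

/-- The list `[v, f v, f² v, …]` of length at most `n+1`. -/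
def chainFrom (f : V → Option V) : ℕ → V → List V
  | 0, v => [v]
  | n+1, v => v :: (match f v with
      | none => []
      | some w => chainFrom f n w)

lemma chainFrom_cons (f : V → Option V) (n : ℕ) (v : V) :
    ∃ t, chainFrom f n v = v :: t := by
  cases n with
  | zero => exact ⟨[], rfl⟩
  | succ n => cases h : f v with
      | none => exact ⟨[], by simp [chainFrom, h]⟩
      | some w => exact ⟨chainFrom f n w, by simp [chainFrom, h]⟩

lemma chainFrom_ne_nil (f : V → Option V) (n : ℕ) (v : V) :
    chainFrom f n v ≠ [] := by
  obtain ⟨t, ht⟩ := chainFrom_cons f n v; simp [ht]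

lemma chainFrom_head? (f : V → Option V) (n : ℕ) (v : V) :
    (chainFrom f n v).head? = some v := by
  obtain ⟨t, ht⟩ := chainFrom_cons f n v; simp [ht]

lemma mem_chainFrom {f : V → Option V} {n : ℕ} {v x : V} :
    x ∈ chainFrom f n v ↔ ∃ i, i ≤ n ∧ iterO f i v = some x := by
  induction n generalizing v with
  | zero =>
      constructor
      · intro h; simp [chainFrom] at h; exact ⟨0, le_refl _, by simp [h]⟩
      · rintro ⟨i, hi, h⟩
        have : i = 0 := by omega
        subst this; simp [chainFrom]; simpa using h.symm
  | succ n ih =>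
      cases h : f v with
      | none =>
          simp only [chainFrom, h]
          constructor
          · intro hx; simp at hx
            exact ⟨0, by omega, by simp [hx]⟩
          · rintro ⟨i, hi, hit⟩
            cases i with
            | zero => simp at hit; simp [hit]
            | succ i => rw [iterO_succ, h] at hit; simp at hit
      | some w =>
          simp only [chainFrom, h, List.mem_cons]
          rw [ih]
          constructor
          · rintro (rfl | ⟨i, hi, hit⟩)
            · exact ⟨0, by omega, rfl⟩
            · exact ⟨i + 1, by omega, by rw [iterO_succ, h]; simpa using hit⟩
          · rintro ⟨i, hi, hit⟩
            cases i with
            | zero => left; simpa using hit.symm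
            | succ i =>
                right; rw [iterO_succ, h] at hit
                exact ⟨i, by omega, by simpa using hit⟩

lemma chainFrom_chain' (f : V → Option V) (n : ℕ) (v : V) :
    (chainFrom f n v).Chain' (fun a b => f a = some b) := by
  induction n generalizing v with
  | zero => simp [chainFrom, List.Chain']
  | succ n ih =>
      cases h : f v with
      | none => simp [chainFrom, h, List.Chain']
      | some w =>
          simp only [chainFrom, h]
          obtain ⟨t, ht⟩ := chainFrom_cons f n w
          rw [ht]
          refine List.isChain_cons_cons.2 ⟨?_, ht ▸ ih w⟩
          rw [h]

lemma chainFrom_nodup {f : V → Option V} {n : ℕ} {v : V}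
    (hdist : ∀ i j x, i ≤ n → j ≤ n → iterO f i v = some x → iterO f j v = some x → i = j) :
    (chainFrom f n v).Nodup := by
  induction n generalizing v with
  | zero => simp [chainFrom]
  | succ n ih =>
      cases h : f v with
      | none => simp [chainFrom, h]
      | some w =>
          simp only [chainFrom, h, List.nodup_cons]
          constructor
          · intro hv
            obtain ⟨i, hi, hit⟩ := mem_chainFrom.1 hv
            have h1 : iterO f (i+1) v = some v := by
              rw [iterO_succ, h]; simpa using hit
            have := hdist 0 (i+1) v (by omega) (by omega) rfl h1
            omega
          · refine ih ?_
            intro i j x hi hj hix hjx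
            have h1 : iterO f (i+1) v = some x := by rw [iterO_succ, h]; simpa using hix
            have h2 : iterO f (j+1) v = some x := by rw [iterO_succ, h]; simpa using hjx
            have := hdist (i+1) (j+1) x (by omega) (by omega) h1 h2
            omega

lemma chainFrom_getLast? {f : V → Option V} {n : ℕ} {v x : V}
    (h : iterO f n v = some x) : (chainFrom f n v).getLast? = some x := by
  induction n generalizing v with
  | zero => simp at h; simp [chainFrom, h]
  | succ n ih =>
      rw [iterO_succ] at h
      cases hw : f v with
      | none => rw [hw] at h; simp at h
      | some w =>
          rw [hw] at h; simp at h
          have := ih h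
          obtain ⟨t, ht⟩ := chainFrom_cons f n w
          simp only [chainFrom, hw]
          rw [ht] at this ⊢
          rw [List.getLast?_cons_cons]
          exact this


/-- Minimal period of an on-cycle vertex. -/
noncomputable def per (f : V → Option V) (v : V) : ℕ :=
  if h : onCycle f v then Nat.find h else 0

lemma per_pos {f : V → Option V} {v : V} (h : onCycle f v) : 0 < per f v := by
  rw [per, dif_pos h]; exact (Nat.find_spec h).1

lemma iterO_per {f : V → Option V} {v : V} (h : onCycle f v) :
    iterO f (per f v) v = some v := by
  rw [per, dif_pos h]; exact (Nat.find_spec h).2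

lemma per_min {f : V → Option V} {v : V} (h : onCycle f v) {d : ℕ}
    (hd0 : 0 < d) (hd : d < per f v) : iterO f d v ≠ some v := by
  rw [per, dif_pos h] at hd
  intro hc
  exact (Nat.find_min h hd) ⟨hd0, hc⟩

/-- Canonical list of the cycle through `v` (for on-cycle `v`). -/
noncomputable def cycListOf (f : V → Option V) (v : V) : List V :=
  chainFrom f (per f v - 1) v

lemma cycListOf_ne_nil (f : V → Option V) (v : V) : cycListOf f v ≠ [] :=
  chainFrom_ne_nil _ _ _

lemma cycListOf_head? (f : V → Option V) (v : V) : (cycListOf f v).head? = some v :=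
  chainFrom_head? _ _ _

lemma cycListOf_nodup {f : V → Option V}
    (hinj : ∀ ⦃a b c : V⦄, f a = some c → f b = some c → a = b)
    {v : V} (h : onCycle f v) : (cycListOf f v).Nodup := by
  apply chainFrom_nodup
  intro i j x hi hj hix hjx
  by_contra hne
  wlog hij : i < j generalizing i j
  · exact this j i hj hi hjx hix (Ne.symm hne) (by omega)
  have hper := iterO_peel hinj (le_of_lt hij) hix hjx
  have hpos := per_pos h
  exact per_min h (by omega) (by omega) hper

lemma mem_cycListOf {f : V → Option V} {v x : V} (h : onCycle f v) :
    x ∈ cycListOf f v ↔ ∃ i, iterO f i v = some x := by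
  rw [cycListOf, mem_chainFrom]
  constructor
  · rintro ⟨i, -, hi⟩; exact ⟨i, hi⟩
  · rintro ⟨i, hi⟩
    have hpos := per_pos h
    have hmod : i % per f v < per f v := Nat.mod_lt _ hpos
    refine ⟨i % per f v, by omega, ?_⟩
    rw [← iterO_mod hpos (iterO_per h) i]
    exact hi

lemma cycListOf_chain' (f : V → Option V) (v : V) :
    (cycListOf f v).Chain' (fun a b => f a = some b) :=
  chainFrom_chain' _ _ _

lemma cycListOf_getLast? {f : V → Option V} {v : V} (h : onCycle f v) :
    ∃ x, (cycListOf f v).getLast? = some x ∧ f x = some v := by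
  have hk := iterO_per h
  have hpos := per_pos h
  obtain ⟨k', hk'⟩ : ∃ k', per f v = k' + 1 := ⟨per f v - 1, by omega⟩
  rw [hk'] at hk
  obtain ⟨x, hx, hfx⟩ := iterO_succ_some hk
  refine ⟨x, ?_, hfx⟩
  rw [cycListOf, hk']
  simpa using chainFrom_getLast? hx

lemma iterO_inv {f g : V → Option V} (hfg : ∀ a b, f a = some b → g b = some a) :
    ∀ {i : ℕ} {v x : V}, iterO f i v = some x → iterO g i x = some v := by
  intro i
  induction i with
  | zero => intro v x h; simp at h; simp [h]
  | succ i ih =>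
      intro v x h
      rw [iterO_succ] at h
      cases hw : f v with
      | none => rw [hw] at h; simp at h
      | some w =>
          rw [hw] at h; simp at h
          rw [iterO_succ', ih h]
          simpa using hfg _ _ hw

lemma isDiCycle_cycListOf {f : V → Option V} {F : Finset (V × V)}
    (hinj : ∀ ⦃a b c : V⦄, f a = some c → f b = some c → a = b)
    (hedge : ∀ a b, f a = some b → (a, b) ∈ F)
    {v : V} (h : onCycle f v) : IsDiCycle F (cycListOf f v) := by
  refine ⟨cycListOf_ne_nil f v, cycListOf_nodup hinj h, ?_, ?_⟩
  · exact (cycListOf_chain' f v).imp (fun a b hab => hedge a b hab)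
  · obtain ⟨x, hx, hfx⟩ := cycListOf_getLast? h
    have hlast : (cycListOf f v).getLast (cycListOf_ne_nil f v) = x := by
      have h1 := List.getLast?_eq_getLast_of_ne_nil (l := cycListOf f v) (cycListOf_ne_nil f v)
      rw [h1] at hx
      exact Option.some_injective _ hx
    have hhead : (cycListOf f v).head (cycListOf_ne_nil f v) = v := by
      have h1 := List.head?_eq_head (l := cycListOf f v) (cycListOf_ne_nil f v)
      have h2 := cycListOf_head? f v
      rw [h1] at h2
      exact Option.some_injective _ h2
    rw [hlast, hhead]
    exact hedge x v hfx

section orbit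
variable [Fintype V]

lemma onCycle_or_sink {f : V → Option V}
    (hinj : ∀ ⦃a b c : V⦄, f a = some c → f b = some c → a = b) (v : V) :
    onCycle f v ∨ ∃ m s, m ≤ Fintype.card V ∧ iterO f m v = some s ∧ f s = none := by
  by_cases hall : ∀ i, iterO f i v ≠ none
  · left
    have maps : ∀ i ∈ Finset.range (Fintype.card V + 1),
        (iterO f i v).getD v ∈ Finset.univ := fun _ _ => Finset.mem_univ _
    obtain ⟨i, hi, j, hj, hne, heq⟩ :=
      Finset.exists_ne_map_eq_of_card_lt_of_maps_to (by simp) maps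
    wlog hij : i < j generalizing i j
    · exact this j hj i hi (Ne.symm hne) heq.symm (by omega)
    obtain ⟨x, hx⟩ := Option.ne_none_iff_exists'.1 (hall i)
    obtain ⟨y, hy⟩ := Option.ne_none_iff_exists'.1 (hall j)
    rw [hx, hy] at heq; simp at heq
    subst heq
    exact ⟨j - i, by omega, iterO_peel hinj (le_of_lt hij) hx hy⟩
  · right
    push_neg at hall
    have hex : ∃ i, iterO f i v = none := hall
    set i₀ := Nat.find hex with hi₀def
    have hi₀ : iterO f i₀ v = none := Nat.find_spec hex
    have hi₀pos : 0 < i₀ := by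
      rcases Nat.eq_zero_or_pos i₀ with h0 | h; · rw [h0] at hi₀; simp [iterO] at hi₀
      · exact h
    set m := i₀ - 1 with hmdef
    obtain ⟨s, hs⟩ := Option.ne_none_iff_exists'.1 (Nat.find_min hex (show m < i₀ by omega))
    have hfs : f s = none := by
      have : iterO f (m + 1) v = none := by rw [show m + 1 = i₀ by omega]; exact hi₀
      rw [iterO_succ', hs] at this; simpa using this
    refine ⟨m, s, ?_, hs, hfs⟩
    -- bound: the iterates 0..m are pairwise distinct
    have key : ∀ a b : ℕ, a < b → b < i₀ →
        (iterO f a v).getD v = (iterO f b v).getD v → False := by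
      intro a b hlt hb hab
      obtain ⟨x, hx⟩ := Option.ne_none_iff_exists'.1 (Nat.find_min hex (show a < i₀ by omega))
      obtain ⟨y, hy⟩ := Option.ne_none_iff_exists'.1 (Nat.find_min hex hb)
      simp only [hx, hy, Option.getD_some] at hab
      subst hab
      have hcyc : onCycle f v := ⟨b - a, by omega, iterO_peel hinj hlt.le hx hy⟩
      obtain ⟨z, hz, -⟩ := onCycle_defined hcyc i₀
      rw [hz] at hi₀; simp at hi₀
    have hinj' : Set.InjOn (fun i => (iterO f i v).getD v) (Finset.range (m + 1)) := by
      intro a ha b hb hab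
      simp only [Finset.coe_range, Set.mem_Iio] at ha hb
      by_contra hne
      rcases Nat.lt_or_ge a b with h | h
      · exact key a b h (by omega) hab
      · exact key b a (by omega) (by omega) hab.symm
    have hcard := Finset.card_le_card_of_injOn _ (fun i _ => Finset.mem_univ ((iterO f i v).getD v)) hinj'
    simp only [Finset.card_range, Finset.card_univ] at hcard
    omega

/-- Set of vertices forward-reachable from `v` under `f`. -/
noncomputable def orbit (f : V → Option V) (v : V) : Finset V :=
  Finset.univ.filter (fun w => ∃ i, iterO f i v = some w)

lemma self_mem_orbit (f : V → Option V) (v : V) : v ∈ orbit f v := by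
  simp [orbit]; exact ⟨0, rfl⟩

lemma orbit_nonempty (f : V → Option V) (v : V) : (orbit f v).Nonempty :=
  ⟨v, self_mem_orbit f v⟩

lemma mem_orbit {f : V → Option V} {v x : V} :
    x ∈ orbit f v ↔ ∃ i, iterO f i v = some x := by simp [orbit]

lemma orbit_trans {f : V → Option V} {u v w : V}
    (h1 : v ∈ orbit f u) (h2 : w ∈ orbit f v) : w ∈ orbit f u := by
  rw [mem_orbit] at *
  obtain ⟨i, hi⟩ := h1; obtain ⟨j, hj⟩ := h2
  exact ⟨i + j, by rw [iterO_add, hi]; simpa using hj⟩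

lemma onCycle_of_mem_orbit {f : V → Option V} {v x : V}
    (h : onCycle f v) (hx : x ∈ orbit f v) : onCycle f x := by
  obtain ⟨k, hk0, hk⟩ := h
  obtain ⟨m, hm⟩ := mem_orbit.1 hx
  exact ⟨k, hk0, onCycle_shift hk hm⟩

lemma base_mem_orbit_of_onCycle {f : V → Option V} {v x : V}
    (h : onCycle f v) (hx : x ∈ orbit f v) : v ∈ orbit f x := by
  obtain ⟨k, hk0, hk⟩ := h
  obtain ⟨m, hm⟩ := mem_orbit.1 hx
  have hmul : iterO f (k * (m + 1)) v = some v := iterO_mul_period hk _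
  have hle : m ≤ k * (m + 1) := by nlinarith
  rw [mem_orbit]
  refine ⟨k * (m + 1) - m, ?_⟩
  have : iterO f (m + (k * (m+1) - m)) v = some v := by
    rw [show m + (k * (m+1) - m) = k * (m+1) by omega]; exact hmul
  rw [iterO_add, hm] at this
  simpa using this

lemma orbit_eq_of_mem {f : V → Option V} {v x : V}
    (h : onCycle f v) (hx : x ∈ orbit f v) : orbit f x = orbit f v := by
  apply Finset.Subset.antisymm
  · intro y hy; exact orbit_trans hx hy
  · intro y hy; exact orbit_trans (base_mem_orbit_of_onCycle h hx) hy

/-- Canonical representative of the cycle through on-cycle vertices. -/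
noncomputable def rep [LinearOrder V] (f : V → Option V) (v : V) : V :=
  (orbit f v).min' (orbit_nonempty f v)

lemma rep_mem_orbit [LinearOrder V] (f : V → Option V) (v : V) :
    rep f v ∈ orbit f v := Finset.min'_mem _ _

end orbit

lemma outdeg_eq_zero_iff {F : Finset (V × V)} {v : V} :
    outdeg F v = 0 ↔ ¬ ∃ w, (v, w) ∈ F := by
  rw [outdeg, Finset.card_eq_zero, Finset.filter_eq_empty_iff]
  constructor
  · rintro h ⟨w, hw⟩
    exact (h hw) rfl
  · rintro h e he rfl
    exact h ⟨e.2, he⟩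

lemma eq_of_indeg_le_one {F : Finset (V × V)} {a b c : V} (h : indeg F c ≤ 1)
    (ha : (a, c) ∈ F) (hb : (b, c) ∈ F) : a = b := by
  by_contra hne
  have h2 : 1 < (F.filter (fun e => e.2 = c)).card := by
    apply Finset.one_lt_card.2
    exact ⟨(a, c), by simp [ha], (b, c), by simp [hb], by simp [hne]⟩
  rw [indeg] at h; omega

lemma open_necklace_has_sink [Fintype V] {E : Finset (V × V)}
    {H : Finset V × Finset (V × V)}
    (hneck : IsNecklace E H) (hopen : ¬ IsClosedNecklace H) :
    (H.1.filter (fun v => outdeg H.2 v = 0)).Nonempty := by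
  by_contra hempty
  rw [Finset.not_nonempty_iff_eq_empty] at hempty
  obtain ⟨⟨v₀, hv₀⟩, hsub, hends, hconn, hindeg⟩ := hneck
  have hout : ∀ v ∈ H.1, ∃ w, (v, w) ∈ H.2 := by
    intro v hv
    have h0 : outdeg H.2 v ≠ 0 := by
      intro h0
      have : v ∈ H.1.filter (fun v => outdeg H.2 v = 0) := Finset.mem_filter.2 ⟨hv, h0⟩
      rw [hempty] at this; simp at this
    rw [outdeg] at h0
    obtain ⟨e, he⟩ := Finset.card_ne_zero.1 h0 |>.exists_mem
    rw [Finset.mem_filter] at he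
    exact ⟨e.2, by rw [← he.2]; exact he.1⟩
  set f : V → Option V := fun v => if h : ∃ w, (v, w) ∈ H.2 then some h.choose else none with hf
  have hedge : ∀ a b, f a = some b → (a, b) ∈ H.2 := by
    intro a b hab
    simp only [hf] at hab
    by_cases h : ∃ w, (a, w) ∈ H.2
    · rw [dif_pos h] at hab
      obtain rfl : h.choose = b := Option.some_injective _ hab
      exact h.choose_spec
    · rw [dif_neg h] at hab; simp at hab
  have hinj : ∀ ⦃a b c : V⦄, f a = some c → f b = some c → a = b := by
    intro a b c hac hbc
    have h1 := hedge _ _ hac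
    have h2 := hedge _ _ hbc
    exact eq_of_indeg_le_one (hindeg c (hends _ h1).2) h1 h2
  have hfH : ∀ v ∈ H.1, ∃ w, f v = some w := by
    intro v hv
    have hex : ∃ w, (v, w) ∈ H.2 := hout v hv
    refine ⟨hex.choose, ?_⟩
    simp only [hf]
    rw [dif_pos hex]
  have hiter : ∀ m, ∃ x, iterO f m v₀ = some x ∧ x ∈ H.1 := by
    intro m
    induction m with
    | zero => exact ⟨v₀, rfl, hv₀⟩
    | succ m ih =>
        obtain ⟨x, hx, hxH⟩ := ih
        obtain ⟨w, hw⟩ := hfH x hxH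
        refine ⟨w, ?_, (hends _ (hedge _ _ hw)).2⟩
        rw [iterO_succ', hx]; simpa using hw
  rcases onCycle_or_sink hinj v₀ with hcyc | ⟨m, s, _, hs, hfs⟩
  · exact hopen ⟨_, isDiCycle_cycListOf hinj hedge hcyc⟩
  · obtain ⟨x, hx, hxH⟩ := hiter m
    rw [hs] at hx
    obtain rfl : s = x := Option.some_injective _ hx
    obtain ⟨w, hw⟩ := hfH s hxH
    rw [hfs] at hw; simp at hw

lemma numOpen_le_numSinks [Fintype V] {E : Finset (V × V)}
    {C : Finset (Finset V × Finset (V × V))} (hC : IsNecklaceCover E C) :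
    numOpen C ≤ numSinks C := by
  obtain ⟨hneck, -, -⟩ := hC
  calc numOpen C = ∑ H ∈ C.filter (fun H => ¬ IsClosedNecklace H), 1 := by
        rw [numOpen, Finset.card_eq_sum_ones]
    _ ≤ ∑ H ∈ C.filter (fun H => ¬ IsClosedNecklace H),
          (H.1.filter (fun v => outdeg H.2 v = 0)).card := by
        apply Finset.sum_le_sum
        intro H hH
        rw [Finset.mem_filter] at hH
        exact Finset.card_pos.2 (open_necklace_has_sink (hneck H hH.1) hH.2)
    _ ≤ numSinks C := Finset.sum_le_sum_of_subset (Finset.filter_subset _ _)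

end NeckAux


open NeckAux in
theorem stmt16 [Fintype V] (E : Finset (V × V))
    (C : Finset (Finset V × Finset (V × V))) (hC : IsNecklaceCover E C) :
    (∃ D : PCCover E, D.paths.card = numOpen C + numLeaves C) ∧
    (∀ pmin : ℕ, IsLeast {m : ℕ | ∃ D : PCCover E, D.paths.card = m} pmin →
      pmin ≤ numOpen C + numLeaves C) := by
  classical
  letI : LinearOrder V := LinearOrder.lift' (Fintype.equivFin V) (Fintype.equivFin V).injective
  have hNOS := numOpen_le_numSinks hC
  obtain ⟨hneck, hdisjC, hcover⟩ := hC
  choose Hof HofC Hofmem using hcover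
  have Hof_eq : ∀ H ∈ C, ∀ v ∈ H.1, Hof v = H := by
    intro H hH v hv
    by_contra hne
    exact Finset.disjoint_left.1 (hdisjC _ (HofC v) _ hH hne) (Hofmem v) hv
  set σ : V → Option V := fun v =>
    if h : ∃ w, (v, w) ∈ (Hof v).2 then some h.choose else none with hσ
  have hσedge : ∀ a b, σ a = some b → (a, b) ∈ (Hof a).2 := by
    intro a b hab
    simp only [hσ] at hab
    by_cases h : ∃ w, (a, w) ∈ (Hof a).2
    · rw [dif_pos h] at hab
      obtain rfl : h.choose = b := Option.some_injective _ hab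
      exact h.choose_spec
    · rw [dif_neg h] at hab; simp at hab
  have hσE : ∀ a b, σ a = some b → (a, b) ∈ E :=
    fun a b h => (hneck _ (HofC a)).2.1 (hσedge a b h)
  have hσnone : ∀ v, σ v = none ↔ outdeg (Hof v).2 v = 0 := by
    intro v
    rw [outdeg_eq_zero_iff]
    simp only [hσ]
    by_cases h : ∃ w, (v, w) ∈ (Hof v).2
    · rw [dif_pos h]; simp [h]
    · rw [dif_neg h]; simp [h]
  have hinj : ∀ ⦃a b c : V⦄, σ a = some c → σ b = some c → a = b := by
    intro a b c ha hb
    have hae := hσedge a c ha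
    have hbe := hσedge b c hb
    have hca : c ∈ (Hof a).1 := ((hneck _ (HofC a)).2.2.1 _ hae).2
    have hcb : c ∈ (Hof b).1 := ((hneck _ (HofC b)).2.2.1 _ hbe).2
    have hHab : Hof a = Hof b := by
      by_contra hne
      exact Finset.disjoint_left.1 (hdisjC _ (HofC a) _ (HofC b) hne) hca hcb
    rw [hHab] at hae
    exact eq_of_indeg_le_one ((hneck _ (HofC b)).2.2.2.2 c hcb) hae hbe
  set τ : V → Option V := fun w =>
    if h : ∃ u, σ u = some w then some h.choose else none with hτ
  have hστ : ∀ a b, σ a = some b → τ b = some a := by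
    intro a b hab
    have hex : ∃ u, σ u = some b := ⟨a, hab⟩
    simp only [hτ]
    rw [dif_pos hex]
    exact congrArg some (hinj hex.choose_spec hab)
  have hτσ : ∀ a b, τ a = some b → σ b = some a := by
    intro a b hab
    simp only [hτ] at hab
    by_cases h : ∃ u, σ u = some a
    · rw [dif_pos h] at hab
      obtain rfl : h.choose = b := Option.some_injective _ hab
      exact h.choose_spec
    · rw [dif_neg h] at hab; simp at hab
  have hτinj : ∀ ⦃a b c : V⦄, τ a = some c → τ b = some c → a = b := by
    intro a b c ha hb
    have ha' := hτσ _ _ ha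
    have hb' := hτσ _ _ hb
    rw [ha'] at hb'
    exact Option.some_injective _ hb'
  set N := Fintype.card V with hN
  set pathOf : V → List V := fun s => (chainFrom τ N s).reverse with hpath
  set sinks : Finset V := Finset.univ.filter (fun v => σ v = none) with hsinks
  set paths : Finset (List V) := sinks.image pathOf with hpaths
  set cycles : Finset (List V) :=
    (Finset.univ.filter (fun v => onCycle σ v)).image
      (fun v => cycListOf σ (rep σ v)) with hcycles
  have mem_pathOf : ∀ s v, v ∈ pathOf s ↔ ∃ i, i ≤ N ∧ iterO τ i s = some v := by
    intro s v
    simp only [hpath, List.mem_reverse]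
    exact mem_chainFrom
  have reach_sink : ∀ s v, v ∈ pathOf s → ∃ i, iterO σ i v = some s := by
    intro s v hv
    obtain ⟨i, -, hi⟩ := (mem_pathOf s v).1 hv
    exact ⟨i, iterO_inv hτσ hi⟩
  have sink_not_onCycle : ∀ s, σ s = none → ¬ onCycle σ s := by
    intro s hs hc
    obtain ⟨w, hw⟩ := onCycle_f_some hc
    rw [hs] at hw; simp at hw
  have path_not_onCycle : ∀ s v, σ s = none → v ∈ pathOf s → ¬ onCycle σ v := by
    intro s v hs hv hc
    obtain ⟨i, hi⟩ := reach_sink s v hv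
    obtain ⟨k, hk0, hk⟩ := hc
    exact sink_not_onCycle s hs ⟨k, hk0, onCycle_shift hk hi⟩
  have path_unique : ∀ s₁ s₂ v, σ s₁ = none → σ s₂ = none →
      v ∈ pathOf s₁ → v ∈ pathOf s₂ → s₁ = s₂ := by
    intro s₁ s₂ v h1 h2 hv1 hv2
    obtain ⟨i, hi⟩ := reach_sink s₁ v hv1
    obtain ⟨j, hj⟩ := reach_sink s₂ v hv2
    have key : ∀ (t₁ t₂ : V) (i j : ℕ), σ t₁ = none → i ≤ j →
        iterO σ i v = some t₁ → iterO σ j v = some t₂ → t₁ = t₂ := by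
      intro t₁ t₂ i j h1 hij hi hj
      have hiter : iterO σ (i + (j - i)) v = some t₂ := by
        rw [show i + (j - i) = j by omega]; exact hj
      rw [iterO_add, hi] at hiter
      simp only [Option.bind_some] at hiter
      rcases Nat.eq_zero_or_pos (j - i) with h0 | hpos
      · rw [h0] at hiter; simpa using hiter
      · obtain ⟨d, hd⟩ : ∃ d, j - i = d + 1 := ⟨j - i - 1, by omega⟩
        rw [hd, iterO_succ, h1] at hiter
        simp at hiter
    rcases Nat.le_total i j with hij | hij
    · exact key s₁ s₂ i j h1 hij hi hj
    · exact (key s₂ s₁ j i h2 hij hj hi).symm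
  have pathOf_getLast? : ∀ s, (pathOf s).getLast? = some s := by
    intro s
    simp only [hpath, List.getLast?_reverse]
    exact chainFrom_head? τ N s
  have pathOf_nodup : ∀ s, σ s = none → (pathOf s).Nodup := by
    intro s hs
    simp only [hpath, List.nodup_reverse]
    apply chainFrom_nodup
    intro i j x hi hj hix hjx
    by_contra hne
    have key : ∀ i j : ℕ, i < j → iterO τ i s = some x → iterO τ j s = some x → False := by
      intro i j hij hix hjx
      have hper := iterO_peel hτinj hij.le hix hjx
      obtain ⟨d, hd⟩ : ∃ d, j - i = d + 1 := ⟨j - i - 1, by omega⟩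
      rw [hd] at hper
      obtain ⟨y, -, hy⟩ := iterO_succ_some hper
      have hsy := hτσ _ _ hy
      rw [hs] at hsy; simp at hsy
    rcases Nat.lt_or_ge i j with h | h
    · exact key i j h hix hjx
    · exact key j i (by omega) hjx hix
  have rep_onCycle : ∀ u, onCycle σ u → onCycle σ (rep σ u) :=
    fun u hu => onCycle_of_mem_orbit hu (rep_mem_orbit σ u)
  have orbit_rep : ∀ u, onCycle σ u → orbit σ (rep σ u) = orbit σ u :=
    fun u hu => orbit_eq_of_mem hu (rep_mem_orbit σ u)
  have mem_cyc : ∀ u v, onCycle σ u → (v ∈ cycListOf σ (rep σ u) ↔ v ∈ orbit σ u) := by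
    intro u v hu
    rw [mem_cycListOf (rep_onCycle u hu), ← orbit_rep u hu, mem_orbit]
  have hpaths_are : ∀ l ∈ paths, IsDiPath E l := by
    intro l hl
    obtain ⟨s, hs, rfl⟩ := Finset.mem_image.1 hl
    rw [hsinks, Finset.mem_filter] at hs
    refine ⟨by simp [hpath, chainFrom_ne_nil], pathOf_nodup s hs.2, ?_⟩
    simp only [hpath]
    rw [List.Chain', List.isChain_reverse]
    refine (chainFrom_chain' τ N s).imp ?_
    intro a b hab
    exact hσE _ _ (hτσ _ _ hab)
  have hcycles_are : ∀ l ∈ cycles, IsDiCycle E l := by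
    intro l hl
    obtain ⟨u, hu, rfl⟩ := Finset.mem_image.1 hl
    rw [Finset.mem_filter] at hu
    exact isDiCycle_cycListOf hinj (fun a b h => hσE a b h) (rep_onCycle u hu.2)
  have cross : ∀ l₁ ∈ paths, ∀ l₂ ∈ cycles, ∀ v, v ∈ l₁ → v ∈ l₂ → False := by
    intro l₁ h₁ l₂ h₂ v hv₁ hv₂
    obtain ⟨s, hs, rfl⟩ := Finset.mem_image.1 h₁
    obtain ⟨u, hu, rfl⟩ := Finset.mem_image.1 h₂
    rw [hsinks, Finset.mem_filter] at hs
    rw [Finset.mem_filter] at hu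
    have hvo : v ∈ orbit σ (rep σ u) :=
      mem_orbit.2 ((mem_cycListOf (rep_onCycle u hu.2)).1 hv₂)
    exact path_not_onCycle s v hs.2 hv₁
      (onCycle_of_mem_orbit (rep_onCycle u hu.2) hvo)
  have cyc_eq : ∀ u₁ u₂, onCycle σ u₁ → onCycle σ u₂ → ∀ v, v ∈ cycListOf σ (rep σ u₁) →
      v ∈ cycListOf σ (rep σ u₂) → rep σ u₁ = rep σ u₂ := by
    intro u₁ u₂ h₁ h₂ v hv₁ hv₂
    have e₁ : orbit σ v = orbit σ u₁ := by
      rw [← orbit_rep u₁ h₁]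
      exact orbit_eq_of_mem (rep_onCycle u₁ h₁)
        (mem_orbit.2 ((mem_cycListOf (rep_onCycle u₁ h₁)).1 hv₁))
    have e₂ : orbit σ v = orbit σ u₂ := by
      rw [← orbit_rep u₂ h₂]
      exact orbit_eq_of_mem (rep_onCycle u₂ h₂)
        (mem_orbit.2 ((mem_cycListOf (rep_onCycle u₂ h₂)).1 hv₂))
    have e : orbit σ u₁ = orbit σ u₂ := e₁.symm.trans e₂
    simp only [rep]
    congr 1
  have hpairwise : ∀ l₁ ∈ paths ∪ cycles, ∀ l₂ ∈ paths ∪ cycles,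
      l₁ ≠ l₂ → ∀ v ∈ l₁, v ∉ l₂ := by
    intro l₁ h₁ l₂ h₂ hne v hv₁ hv₂
    rcases Finset.mem_union.1 h₁ with hp₁ | hc₁ <;> rcases Finset.mem_union.1 h₂ with hp₂ | hc₂
    · obtain ⟨s₁, hs₁, rfl⟩ := Finset.mem_image.1 hp₁
      obtain ⟨s₂, hs₂, rfl⟩ := Finset.mem_image.1 hp₂
      rw [hsinks, Finset.mem_filter] at hs₁ hs₂
      exact hne (by rw [path_unique s₁ s₂ v hs₁.2 hs₂.2 hv₁ hv₂])
    · exact cross _ hp₁ _ hc₂ v hv₁ hv₂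
    · exact cross _ hp₂ _ hc₁ v hv₂ hv₁
    · obtain ⟨u₁, hu₁, rfl⟩ := Finset.mem_image.1 hc₁
      obtain ⟨u₂, hu₂, rfl⟩ := Finset.mem_image.1 hc₂
      rw [Finset.mem_filter] at hu₁ hu₂
      exact hne (by rw [cyc_eq u₁ u₂ hu₁.2 hu₂.2 v hv₁ hv₂])
  have hdisjPC : Disjoint paths cycles := by
    rw [Finset.disjoint_left]
    intro l hp hc
    obtain ⟨s, hs, hl⟩ := Finset.mem_image.1 hp
    obtain ⟨v, hv⟩ := List.exists_mem_of_ne_nil (pathOf s)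
      (by simp [hpath, chainFrom_ne_nil])
    rw [hl] at hv
    exact cross _ hp _ hc v hv hv
  have hcovers : ∀ v : V, ∃ l ∈ paths ∪ cycles, v ∈ l := by
    intro v
    rcases onCycle_or_sink hinj v with hcyc | ⟨m, s, hm, hs, hfs⟩
    · refine ⟨cycListOf σ (rep σ v), Finset.mem_union_right _ ?_, ?_⟩
      · exact Finset.mem_image.2 ⟨v, Finset.mem_filter.2 ⟨Finset.mem_univ v, hcyc⟩, rfl⟩
      · exact (mem_cyc v v hcyc).2 (self_mem_orbit σ v)
    · refine ⟨pathOf s, Finset.mem_union_left _ ?_, ?_⟩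
      · exact Finset.mem_image.2 ⟨s, Finset.mem_filter.2 ⟨Finset.mem_univ s, hfs⟩, rfl⟩
      · exact (mem_pathOf s v).2 ⟨m, hm, iterO_inv hστ hs⟩
  set D : PCCover E := ⟨paths, cycles, hpaths_are, hcycles_are, hdisjPC, hpairwise, hcovers⟩
    with hD
  have hcard : paths.card = sinks.card := by
    rw [hpaths]
    apply Finset.card_image_of_injOn
    intro s₁ h₁ s₂ h₂ heq
    have hgl := pathOf_getLast? s₁
    rw [heq, pathOf_getLast? s₂] at hgl
    exact (Option.some_injective _ hgl).symm
  have hsinkscard : sinks.card = numSinks C := by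
    have hset : sinks = C.biUnion (fun H => H.1.filter (fun v => outdeg H.2 v = 0)) := by
      ext v
      rw [hsinks, Finset.mem_filter, Finset.mem_biUnion]
      constructor
      · rintro ⟨-, hv⟩
        exact ⟨Hof v, HofC v, Finset.mem_filter.2 ⟨Hofmem v, (hσnone v).1 hv⟩⟩
      · rintro ⟨H, hH, hv⟩
        rw [Finset.mem_filter] at hv
        refine ⟨Finset.mem_univ v, (hσnone v).2 ?_⟩
        rw [Hof_eq H hH v hv.1]
        exact hv.2
    rw [hset, numSinks, Finset.card_biUnion]
    intro H₁ h₁ H₂ h₂ hne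
    exact Finset.disjoint_filter_filter (hdisjC _ h₁ _ h₂ hne)
  have hfinal : D.paths.card = numOpen C + numLeaves C := by
    have hDp : D.paths = paths := rfl
    rw [hDp, hcard, hsinkscard, numLeaves]
    omega
  exact ⟨⟨D, hfinal⟩, fun pmin hleast => hleast.2 ⟨D, hfinal⟩⟩
end
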